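/- arXiv:1304.3042 — 4 statements merged into one kernel-verified Lean document; each statement's English description precedes it below -/
import Mathlib

section
/- Assume 0 ∈ I, where I ⊆ ℝ is a nontrivial real interval. A function f : Iⁿ → ℝ satisfying f(0) = 0 is a signed Choquet integral if and only if f(λx + (1−λ)x') = λ f(x) + (1−λ) f(x') for every λ ∈ [0,1], every permutation σ of X, and every x, x' ∈ Iⁿ_σ. -/
/-- `S↑_σ(i)` (0-indexed): the set `{σ(i), σ(i+1), …, σ(n-1)}`.  For `i = n` it is empty. -/
def SUp {n : ℕ} (σ : Equiv.Perm (Fin n)) (i : ℕ) : Finset (Fin n) :=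
  (Finset.univ.filter (fun j : Fin n => i ≤ (j : ℕ))).image σ

/-- `S↓_σ(i)`: the set `{σ(0), …, σ(i-1)}`.  For `i = 0` it is empty. -/
def SDown {n : ℕ} (σ : Equiv.Perm (Fin n)) (i : ℕ) : Finset (Fin n) :=
  (Finset.univ.filter (fun j : Fin n => (j : ℕ) < i)).image σ

/-- Two tuples are comonotonic if some permutation sorts both nondecreasingly. -/
def Comonotone {n : ℕ} (x y : Fin n → ℝ) : Prop :=
  ∃ σ : Equiv.Perm (Fin n), Monotone (x ∘ σ) ∧ Monotone (y ∘ σ)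

/-- The tuple `r·1_S`. -/
def indTuple {n : ℕ} (S : Finset (Fin n)) (r : ℝ) : Fin n → ℝ :=
  fun j => if j ∈ S then r else 0

/-- The signed Choquet integral of `x` w.r.t. `v`, computed via a sorting permutation. -/
noncomputable def Cv {n : ℕ} (v : Finset (Fin n) → ℝ) (x : Fin n → ℝ) : ℝ :=
  ∑ i : Fin n,
    x (Tuple.sort x i) *
      (v (SUp (Tuple.sort x) (i : ℕ)) - v (SUp (Tuple.sort x) ((i : ℕ) + 1)))

/-- `f` is the restriction to `Iⁿ` of a signed Choquet integral. -/
def IsSignedChoquetOn {n : ℕ} (I : Set ℝ) (f : (Fin n → ℝ) → ℝ) : Prop :=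
  ∃ v : Finset (Fin n) → ℝ, v ∅ = 0 ∧
    ∀ σ : Equiv.Perm (Fin n), ∀ x : Fin n → ℝ, (∀ i, x i ∈ I) → Monotone (x ∘ σ) →
      f x = ∑ i : Fin n, x (σ i) * (v (SUp σ (i : ℕ)) - v (SUp σ ((i : ℕ) + 1)))

/-- `f` is the restriction to `Iⁿ` of a symmetric signed Choquet integral
`Č_v(x) = C_v(x⁺) - C_v(x⁻)`. -/
def IsSymSignedChoquetOn {n : ℕ} (I : Set ℝ) (f : (Fin n → ℝ) → ℝ) : Prop :=
  ∃ v : Finset (Fin n) → ℝ, v ∅ = 0 ∧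
    ∀ x : Fin n → ℝ, (∀ i, x i ∈ I) →
      f x = Cv v (fun i => max (x i) 0) - Cv v (fun i => max (-x i) 0)

/-- Comonotonic modularity (on tuples with entries in `D`). -/
def ComonModularOn {n : ℕ} (D : Set ℝ) (f : (Fin n → ℝ) → ℝ) : Prop :=
  ∀ x y : Fin n → ℝ, (∀ i, x i ∈ D) → (∀ i, y i ∈ D) → Comonotone x y →
    f x + f y = f (fun i => min (x i) (y i)) + f (fun i => max (x i) (y i))

/-- Comonotonic additivity (on tuples with entries in `D`). -/
def ComonAdditiveOn {n : ℕ} (D : Set ℝ) (f : (Fin n → ℝ) → ℝ) : Prop :=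
  ∀ x y : Fin n → ℝ, (∀ i, x i ∈ D) → (∀ i, y i ∈ D) → Comonotone x y →
    (∀ i, x i + y i ∈ D) → f (fun i => x i + y i) = f x + f y

/-- Comonotonic maxitivity. -/
def ComonMaxitiveOn {n : ℕ} (D : Set ℝ) (f : (Fin n → ℝ) → ℝ) : Prop :=
  ∀ x y : Fin n → ℝ, (∀ i, x i ∈ D) → (∀ i, y i ∈ D) → Comonotone x y →
    f (fun i => max (x i) (y i)) = max (f x) (f y)

/-- Comonotonic minitivity. -/
def ComonMinitiveOn {n : ℕ} (D : Set ℝ) (f : (Fin n → ℝ) → ℝ) : Prop :=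
  ∀ x y : Fin n → ℝ, (∀ i, x i ∈ D) → (∀ i, y i ∈ D) → Comonotone x y →
    f (fun i => min (x i) (y i)) = min (f x) (f y)

/-- Horizontal min-additivity. -/
def HorizMinAdditiveOn {n : ℕ} (D : Set ℝ) (f : (Fin n → ℝ) → ℝ) : Prop :=
  ∀ x : Fin n → ℝ, (∀ i, x i ∈ D) → ∀ c ∈ D, (∀ i, x i - min (x i) c ∈ D) →
    f x = f (fun i => min (x i) c) + f (fun i => x i - min (x i) c)

/-- Horizontal max-additivity. -/
def HorizMaxAdditiveOn {n : ℕ} (D : Set ℝ) (f : (Fin n → ℝ) → ℝ) : Prop :=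
  ∀ x : Fin n → ℝ, (∀ i, x i ∈ D) → ∀ c ∈ D, (∀ i, x i - max (x i) c ∈ D) →
    f x = f (fun i => max (x i) c) + f (fun i => x i - max (x i) c)

/-- Horizontal median-additivity (for `I` centered at `0`). -/
def HorizMedAdditiveOn {n : ℕ} (I : Set ℝ) (f : (Fin n → ℝ) → ℝ) : Prop :=
  ∀ x : Fin n → ℝ, (∀ i, x i ∈ I) → ∀ c ∈ I, 0 ≤ c →
    f x = f (fun i => max (-c) (min (x i) c)) + f (fun i => x i - min (x i) c)
        + f (fun i => x i - max (x i) (-c))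

/-- Invariance under horizontal min-differences (for domains of nonnegative tuples). -/
def InvHMinDiffOn {n : ℕ} (D : Set ℝ) (f : (Fin n → ℝ) → ℝ) : Prop :=
  ∀ x : Fin n → ℝ, (∀ i, x i ∈ D) → ∀ c ∈ D,
    f x - f (fun i => min (x i) c) =
      f (fun i => if x i ≤ c then 0 else x i) -
        f (fun i => min (if x i ≤ c then 0 else x i) c)

/-- Invariance under horizontal max-differences (for domains of nonpositive tuples). -/
def InvHMaxDiffOn {n : ℕ} (D : Set ℝ) (f : (Fin n → ℝ) → ℝ) : Prop :=
  ∀ x : Fin n → ℝ, (∀ i, x i ∈ D) → ∀ c ∈ D,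
    f x - f (fun i => max (x i) c) =
      f (fun i => if c ≤ x i then 0 else x i) -
        f (fun i => max (if c ≤ x i then 0 else x i) c)

/-- `⋀_{i ∈ S} x i`, with the convention that the empty infimum is `b`. -/
noncomputable def infWith {n : ℕ} (b : ℝ) (S : Finset (Fin n)) (x : Fin n → ℝ) : ℝ :=
  if h : S.Nonempty then S.inf' h x else b

/-- An `[a,b]`-valued capacity. -/
def IsCapacityOn {n : ℕ} (a b : ℝ) (μ : Finset (Fin n) → ℝ) : Prop :=
  μ ∅ = a ∧ μ Finset.univ = b ∧ ∀ S T : Finset (Fin n), S ⊆ T → μ S ≤ μ T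

/-- `f` is nondecreasing (in each argument) on tuples with entries in `D`. -/
def NondecreasingOn {n : ℕ} (D : Set ℝ) (f : (Fin n → ℝ) → ℝ) : Prop :=
  ∀ x y : Fin n → ℝ, (∀ i, x i ∈ D) → (∀ i, y i ∈ D) → (∀ i, x i ≤ y i) → f x ≤ f y

namespace ChoquetAux

noncomputable def uf {n : ℕ} (σ : Equiv.Perm (Fin n)) (y : Fin n → ℝ) (k : ℕ) : ℝ :=
  if h : k < n then y (σ ⟨k, h⟩) else 0

lemma mem_SUp {n : ℕ} {σ : Equiv.Perm (Fin n)} {i : ℕ} {j : Fin n} :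
    j ∈ SUp σ i ↔ i ≤ ((σ.symm j : Fin n) : ℕ) := by
  constructor
  · rintro h
    rw [SUp, Finset.mem_image] at h
    obtain ⟨k, hk, rfl⟩ := h
    rw [Finset.mem_filter] at hk
    simpa using hk.2
  · intro h
    rw [SUp, Finset.mem_image]
    exact ⟨σ.symm j, Finset.mem_filter.2 ⟨Finset.mem_univ _, h⟩, by simp⟩

lemma SUp_zero {n : ℕ} (σ : Equiv.Perm (Fin n)) : SUp σ 0 = Finset.univ := by
  ext j; simp [mem_SUp]

lemma SUp_n {n : ℕ} (σ : Equiv.Perm (Fin n)) : SUp σ n = ∅ := by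
  ext j
  simp only [Finset.notMem_empty, iff_false, mem_SUp, not_le]
  exact (σ.symm j).isLt

lemma shift_sum (g : ℕ → ℝ) (n : ℕ) (h0 : g 0 = 0) (hn : g n = 0) :
    ∑ i ∈ Finset.range n, g (i + 1) = ∑ i ∈ Finset.range n, g i := by
  have h1 := Finset.sum_range_succ' g n
  have h2 := Finset.sum_range_succ g n
  rw [h2] at h1
  rw [h0, hn] at h1
  linarith

lemma abel1 (u a : ℕ → ℝ) (n : ℕ) (ha : a n = 0) :
    ∑ i ∈ Finset.range n, u i * (a i - a (i + 1)) =
      ∑ i ∈ Finset.range n, (u i - if i = 0 then 0 else u (i - 1)) * a i := by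
  set g : ℕ → ℝ := fun i => (if i = 0 then (0 : ℝ) else u (i - 1)) * a i with hg
  have key : ∑ i ∈ Finset.range n, g (i + 1) = ∑ i ∈ Finset.range n, g i :=
    shift_sum g n (by simp [hg]) (by by_cases h : n = 0 <;> simp [hg, ha, h])
  have e1 : ∀ i ∈ Finset.range n, u i * (a i - a (i + 1)) = u i * a i - g (i + 1) := by
    intro i _; simp only [hg, Nat.succ_ne_zero, if_false, Nat.add_sub_cancel]; ring
  have e2 : ∀ i ∈ Finset.range n,
      (u i - if i = 0 then 0 else u (i - 1)) * a i = u i * a i - g i := by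
    intro i _; simp only [hg]; ring
  rw [Finset.sum_congr rfl e1, Finset.sum_congr rfl e2, Finset.sum_sub_distrib,
    Finset.sum_sub_distrib, key]

lemma abel2 (u a : ℕ → ℝ) (n : ℕ) (hu : u n = 0) :
    ∑ i ∈ Finset.range n, (u i - u (i + 1)) * (a 0 - a (i + 1)) =
      ∑ i ∈ Finset.range n, u i * (a i - a (i + 1)) := by
  have key : ∀ i ∈ Finset.range n, (u i - u (i + 1)) * (a 0 - a (i + 1)) =
      u i * (a i - a (i + 1)) + (a 0 * u i - a 0 * u (i + 1)) +
        (u (i + 1) * a (i + 1) - u i * a i) := by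
    intro i _; ring
  rw [Finset.sum_congr rfl key, Finset.sum_add_distrib, Finset.sum_add_distrib,
    Finset.sum_range_sub' (fun i => a 0 * u i) n, Finset.sum_range_sub (fun i => u i * a i) n]
  rw [hu]; ring

end ChoquetAux
theorem statement0 (n : ℕ) (hn : 0 < n) (I : Set ℝ) (hI : I.OrdConnected)
    (hInt : ∃ a b : ℝ, a ∈ I ∧ b ∈ I ∧ a < b) (h0I : (0 : ℝ) ∈ I)
    (f : (Fin n → ℝ) → ℝ) (hf0 : f (fun _ => 0) = 0) :
    IsSignedChoquetOn I f ↔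
      ∀ lam : ℝ, lam ∈ Set.Icc (0 : ℝ) 1 →
        ∀ σ : Equiv.Perm (Fin n), ∀ x x' : Fin n → ℝ,
          (∀ i, x i ∈ I) → (∀ i, x' i ∈ I) →
          Monotone (x ∘ σ) → Monotone (x' ∘ σ) →
          f (fun i => lam * x i + (1 - lam) * x' i) = lam * f x + (1 - lam) * f x' := by
  constructor
  · rintro ⟨v, hv0, hv⟩ lam hlam σ x x' hx hx' hmx hmx'
    obtain ⟨hl0, hl1⟩ := hlam
    have hz : ∀ i, lam * x i + (1 - lam) * x' i ∈ I := by
      intro i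
      rcases le_total (x i) (x' i) with h | h
      · refine hI.out (hx i) (hx' i) ⟨?_, ?_⟩ <;> nlinarith
      · refine hI.out (hx' i) (hx i) ⟨?_, ?_⟩ <;> nlinarith
    have hmz : Monotone ((fun i => lam * x i + (1 - lam) * x' i) ∘ σ) := by
      intro i j hij
      have h1 := hmx hij
      have h2 := hmx' hij
      simp only [Function.comp_apply] at h1 h2 ⊢
      nlinarith
    rw [hv σ _ hz hmz, hv σ x hx hmx, hv σ x' hx' hmx', Finset.mul_sum, Finset.mul_sum,
      ← Finset.sum_add_distrib]
    exact Finset.sum_congr rfl fun i _ => by ring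
  · intro H
    obtain ⟨aa, bb, haaI, hbbI, haabb⟩ := hInt
    have hIcc : ∀ {p q r : ℝ}, p ∈ I → q ∈ I → p ≤ r → r ≤ q → r ∈ I := by
      intro p q r hp hq h1 h2; exact hI.out hp hq ⟨h1, h2⟩
    -- homogeneity
    have homog : ∀ σ : Equiv.Perm (Fin n), ∀ x : Fin n → ℝ, (∀ i, x i ∈ I) → Monotone (x ∘ σ) →
        ∀ t : ℝ, 0 ≤ t → t ≤ 1 → f (fun i => t * x i) = t * f x := by
      intro σ x hx hm t ht0 ht1
      have h0m : Monotone ((fun _ : Fin n => (0 : ℝ)) ∘ σ) := monotone_const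
      have hcomb := H t ⟨ht0, ht1⟩ σ x (fun _ => 0) hx (fun _ => h0I) hm h0m
      simp only [mul_zero, add_zero] at hcomb
      rw [hf0] at hcomb
      rw [hcomb]; ring
    -- additivity on a common cone
    have addf : ∀ σ : Equiv.Perm (Fin n), ∀ x y : Fin n → ℝ, (∀ i, x i ∈ I) → (∀ i, y i ∈ I) →
        Monotone (x ∘ σ) → Monotone (y ∘ σ) → (∀ i, x i + y i ∈ I) →
        f (fun i => x i + y i) = f x + f y := by
      intro σ x y hx hy hmx hmy hs
      have hms : Monotone ((fun i => x i + y i) ∘ σ) := hmx.add hmy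
      have h1 : f (fun i => (1 / 2 : ℝ) * (x i + y i)) = (1 / 2 : ℝ) * f (fun i => x i + y i) :=
        homog σ _ hs hms (1 / 2) (by norm_num) (by norm_num)
      have h2 := H (1 / 2) ⟨by norm_num, by norm_num⟩ σ x y hx hy hmx hmy
      have he : (fun i => (1 : ℝ) / 2 * x i + (1 - 1 / 2) * y i)
          = fun i => (1 / 2 : ℝ) * (x i + y i) := by
        funext i; ring
      rw [he, h1] at h2
      linarith
    have ind_mem : ∀ (S : Finset (Fin n)) (c : ℝ), c ∈ I → ∀ i, indTuple S c i ∈ I := by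
      intro S c hc i
      simp only [indTuple]
      split
      · exact hc
      · exact h0I
    have ind_zero : ∀ S : Finset (Fin n), indTuple S (0 : ℝ) = fun _ => 0 := by
      intro S; funext j; simp [indTuple]
    have ind_empty : ∀ r : ℝ, indTuple (∅ : Finset (Fin n)) r = fun _ => 0 := by
      intro r; funext j; simp [indTuple]
    have scale : ∀ (S : Finset (Fin n)) (c e : ℝ), e ∈ I → e ≠ 0 →
        0 ≤ c / e → c / e ≤ 1 → f (indTuple S c) = (c / e) * f (indTuple S e) := by
      intro S c e he hne h0 h1
      have hhom := homog (Tuple.sort (indTuple S e)) (indTuple S e) (ind_mem S e he)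
        (Tuple.monotone_sort _) (c / e) h0 h1
      have he2 : (fun i => (c / e) * indTuple S e i) = indTuple S c := by
        funext i
        simp only [indTuple]
        split
        · exact div_mul_cancel₀ c hne
        · ring
      rw [he2] at hhom
      exact hhom
    have slope_pos : ∀ (S : Finset (Fin n)) (c e : ℝ), c ∈ I → e ∈ I → 0 < c → 0 < e →
        f (indTuple S c) * e = f (indTuple S e) * c := by
      intro S c e hc he hc0 he0
      rcases le_total c e with h | h
      · rw [scale S c e he he0.ne' (by positivity) (by rw [div_le_one he0]; exact h)]
        field_simp
      · rw [scale S e c hc hc0.ne' (by positivity) (by rw [div_le_one hc0]; exact h)]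
        field_simp
    have slope_neg : ∀ (S : Finset (Fin n)) (c e : ℝ), c ∈ I → e ∈ I → c < 0 → e < 0 →
        f (indTuple S c) * e = f (indTuple S e) * c := by
      intro S c e hc he hc0 he0
      rcases le_total e c with h | h
      · have hq0 : 0 ≤ c / e := by
          have : 0 ≤ (-c) / (-e) := div_nonneg (by linarith) (by linarith)
          simpa using this
        have hq1 : c / e ≤ 1 := by rw [div_le_iff_of_neg he0]; linarith
        rw [scale S c e he he0.ne hq0 hq1]
        field_simp [he0.ne]
      · have hq0 : 0 ≤ e / c := by
          have : 0 ≤ (-e) / (-c) := div_nonneg (by linarith) (by linarith)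
          simpa using this
        have hq1 : e / c ≤ 1 := by rw [div_le_iff_of_neg hc0]; linarith
        rw [scale S e c hc hc0.ne hq0 hq1]
        field_simp [hc0.ne]
    -- ===== the main construction lemma =====
    have main : ∀ v : Finset (Fin n) → ℝ, v ∅ = 0 →
        (∀ (S : Finset (Fin n)) (c : ℝ), c ∈ I → 0 ≤ c → f (indTuple S c) = c * v S) →
        (∀ (T : Finset (Fin n)) (d : ℝ), d ∈ I → d ≤ 0 →
          f (indTuple T d) = d * (v Finset.univ - v Tᶜ)) →
        IsSignedChoquetOn I f := by
      intro v hv0 P1 P2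
      refine ⟨v, hv0, ?_⟩
      intro σ x hx hmx
      have hufmono : ∀ (y : Fin n → ℝ), Monotone (y ∘ σ) → ∀ p q : ℕ, p ≤ q → q < n →
          ChoquetAux.uf σ y p ≤ ChoquetAux.uf σ y q := by
        intro y hmy p q hpq hq
        have hp : p < n := lt_of_le_of_lt hpq hq
        unfold ChoquetAux.uf
        rw [dif_pos hp, dif_pos hq]
        exact hmy (show (⟨p, hp⟩ : Fin n) ≤ ⟨q, hq⟩ from hpq)
      have hufle : ∀ (y : Fin n → ℝ), Monotone (y ∘ σ) → ∀ (j : Fin n) (q : ℕ) (hq : q < n),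
          q ≤ ((σ.symm j : Fin n) : ℕ) → ChoquetAux.uf σ y q ≤ y j := by
        intro y hmy j q hq hle
        have h1 : (y ∘ σ) ⟨q, hq⟩ ≤ (y ∘ σ) (σ.symm j) :=
          hmy (show (⟨q, hq⟩ : Fin n) ≤ σ.symm j from hle)
        simp only [Function.comp_apply, Equiv.apply_symm_apply] at h1
        unfold ChoquetAux.uf
        rw [dif_pos hq]
        exact h1
      have hlef : ∀ (y : Fin n → ℝ), Monotone (y ∘ σ) → ∀ (j : Fin n) (q : ℕ) (hq : q < n),
          ((σ.symm j : Fin n) : ℕ) ≤ q → y j ≤ ChoquetAux.uf σ y q := by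
        intro y hmy j q hq hle
        have h1 : (y ∘ σ) (σ.symm j) ≤ (y ∘ σ) ⟨q, hq⟩ :=
          hmy (show σ.symm j ≤ (⟨q, hq⟩ : Fin n) from hle)
        simp only [Function.comp_apply, Equiv.apply_symm_apply] at h1
        unfold ChoquetAux.uf
        rw [dif_pos hq]
        exact h1
      -- nonnegative case
      have NN : ∀ y : Fin n → ℝ, (∀ i, y i ∈ I) → Monotone (y ∘ σ) → (∀ i, 0 ≤ y i) →
          f y = ∑ k ∈ Finset.range n,
            (ChoquetAux.uf σ y k - if k = 0 then 0 else ChoquetAux.uf σ y (k - 1)) *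
              v (SUp σ k) := by
        intro y hy hmy hy0
        have hy0' : ∀ k : ℕ, 0 ≤ ChoquetAux.uf σ y k := by
          intro k; unfold ChoquetAux.uf; split
          · exact hy0 _
          · exact le_refl _
        set pv : ℕ → ℝ := fun k => if k = 0 then 0 else ChoquetAux.uf σ y (k - 1) with hpv
        have hpvle : ∀ k, k < n → 0 ≤ pv k ∧ pv k ≤ ChoquetAux.uf σ y k := by
          intro k hkn
          constructor
          · simp only [hpv]; split
            · exact le_refl _
            · exact hy0' _
          · simp only [hpv]; split
            · exact hy0' _
            · exact hufmono y hmy (k - 1) k (Nat.sub_le k 1) hkn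
        have key : ∀ k, k ≤ n → f (fun j => min (y j) (pv k)) =
            ∑ i ∈ Finset.range k, (ChoquetAux.uf σ y i - pv i) * v (SUp σ i) := by
          intro k
          induction k with
          | zero =>
            intro _
            have hz : (fun j => min (y j) (pv 0)) = fun _ => (0 : ℝ) := by
              funext j
              simp only [hpv, if_pos rfl]
              exact min_eq_right (hy0 j)
            rw [hz, hf0]
            simp
          | succ k ih =>
            intro hk
            have hkn : k < n := hk
            have ihh := ih (le_of_lt hkn)
            set c : ℝ := ChoquetAux.uf σ y k - pv k with hc
            have hufkI : ChoquetAux.uf σ y k ∈ I := by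
              unfold ChoquetAux.uf; rw [dif_pos hkn]; exact hy _
            have hc0 : 0 ≤ c := by rw [hc]; linarith [(hpvle k hkn).2]
            have hcle : c ≤ ChoquetAux.uf σ y k := by rw [hc]; linarith [(hpvle k hkn).1]
            have hcI : c ∈ I := hIcc h0I hufkI hc0 hcle
            have hpv1 : pv (k + 1) = ChoquetAux.uf σ y k := by
              simp only [hpv, Nat.succ_ne_zero, if_false, Nat.add_sub_cancel]
            have hpt : ∀ j, min (y j) (pv (k + 1)) =
                min (y j) (pv k) + indTuple (SUp σ k) c j := by
              intro j
              by_cases hjk : k ≤ ((σ.symm j : Fin n) : ℕ)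
              · have hmem : j ∈ SUp σ k := ChoquetAux.mem_SUp.2 hjk
                have h1 : ChoquetAux.uf σ y k ≤ y j := hufle y hmy j k hkn hjk
                have h2 : pv k ≤ y j := le_trans (hpvle k hkn).2 h1
                rw [hpv1, min_eq_right h1, min_eq_right h2]
                simp only [indTuple, if_pos hmem, hc]
                ring
              · have hmem : j ∉ SUp σ k := fun h => hjk (ChoquetAux.mem_SUp.1 h)
                have hk0 : k ≠ 0 := by omega
                have hj1 : ((σ.symm j : Fin n) : ℕ) ≤ k - 1 := by omega
                have h1 : y j ≤ pv k := by
                  simp only [hpv, if_neg hk0]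
                  exact hlef y hmy j (k - 1) (by omega) hj1
                have h2 : y j ≤ ChoquetAux.uf σ y k := le_trans h1 (hpvle k hkn).2
                rw [hpv1, min_eq_left h2, min_eq_left h1]
                simp only [indTuple, if_neg hmem, add_zero]
            have mem1 : ∀ i, min (y i) (pv k) ∈ I := fun i =>
              hIcc h0I (hy i) (le_min (hy0 i) (hpvle k hkn).1) (min_le_left _ _)
            have mono1 : Monotone ((fun j => min (y j) (pv k)) ∘ σ) :=
              Monotone.min hmy monotone_const
            have mem2 : ∀ i, indTuple (SUp σ k) c i ∈ I := ind_mem _ _ hcI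
            have mono2 : Monotone (indTuple (SUp σ k) c ∘ σ) := by
              intro i j hij
              simp only [Function.comp_apply, indTuple]
              have e : ∀ m : Fin n, (σ m ∈ SUp σ k) ↔ k ≤ (m : ℕ) := by
                intro m; rw [ChoquetAux.mem_SUp, Equiv.symm_apply_apply]
              by_cases h1 : k ≤ (i : ℕ)
              · rw [if_pos ((e i).2 h1),
                  if_pos ((e j).2 (le_trans h1 (show (i : ℕ) ≤ (j : ℕ) from hij)))]
              · by_cases h2 : k ≤ (j : ℕ)
                · rw [if_neg (fun h => h1 ((e i).1 h)), if_pos ((e j).2 h2)]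
                  exact hc0
                · rw [if_neg (fun h => h1 ((e i).1 h)), if_neg (fun h => h2 ((e j).1 h))]
            have memsum : ∀ i, (fun j => min (y j) (pv k)) i + indTuple (SUp σ k) c i ∈ I := by
              intro i
              rw [← hpt i]
              refine hIcc h0I (hy i) (le_min (hy0 i) ?_) (min_le_left _ _)
              rw [hpv1]; exact hy0' k
            have hadd := addf σ _ _ mem1 mem2 mono1 mono2 memsum
            have hfun : (fun j => min (y j) (pv (k + 1))) =
                (fun i => (fun j => min (y j) (pv k)) i + indTuple (SUp σ k) c i) := by
              funext j; exact hpt j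
            rw [hfun, hadd, ihh, P1 (SUp σ k) c hcI hc0, Finset.sum_range_succ]
        have hfin := key n le_rfl
        have hxeq : (fun j => min (y j) (pv n)) = y := by
          funext j
          have hn0 : n ≠ 0 := Nat.pos_iff_ne_zero.mp hn
          have hjlt := (σ.symm j).isLt
          have h1 : y j ≤ pv n := by
            simp only [hpv, if_neg hn0]
            exact hlef y hmy j (n - 1) (by omega) (by omega)
          exact min_eq_left h1
        rw [hxeq] at hfin
        exact hfin
      -- nonpositive case
      have NP : ∀ y : Fin n → ℝ, (∀ i, y i ∈ I) → Monotone (y ∘ σ) → (∀ i, y i ≤ 0) →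
          f y = ∑ k ∈ Finset.range n,
            (ChoquetAux.uf σ y k - ChoquetAux.uf σ y (k + 1)) *
              (v Finset.univ - v (SUp σ (k + 1))) := by
        intro y hy hmy hy0
        have hy0' : ∀ k : ℕ, ChoquetAux.uf σ y k ≤ 0 := by
          intro k; unfold ChoquetAux.uf; split
          · exact hy0 _
          · exact le_refl _
        have humono : ∀ p q : ℕ, p ≤ q → p < n →
            ChoquetAux.uf σ y p ≤ ChoquetAux.uf σ y q := by
          intro p q hpq hp
          by_cases hq : q < n
          · exact hufmono y hmy p q hpq hq
          · have h1 : ChoquetAux.uf σ y q = 0 := by unfold ChoquetAux.uf; rw [dif_neg hq]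
            rw [h1]; exact hy0' p
        have key : ∀ k, k ≤ n →
            f y = f (fun j => max (y j) (ChoquetAux.uf σ y k)) +
              ∑ i ∈ Finset.range k, (ChoquetAux.uf σ y i - ChoquetAux.uf σ y (i + 1)) *
                (v Finset.univ - v (SUp σ (i + 1))) := by
          intro k
          induction k with
          | zero =>
            intro _
            have hz : (fun j => max (y j) (ChoquetAux.uf σ y 0)) = y := by
              funext j
              exact max_eq_left (hufle y hmy j 0 hn (Nat.zero_le _))
            rw [hz]
            simp
          | succ k ih =>
            intro hk
            have hkn : k < n := hk
            set d : ℝ := ChoquetAux.uf σ y k - ChoquetAux.uf σ y (k + 1) with hd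
            have hd0 : d ≤ 0 := by
              rw [hd]; have := humono k (k + 1) (by omega) hkn; linarith
            have hdI : d ∈ I := by
              have h1 : ChoquetAux.uf σ y k ∈ I := by
                unfold ChoquetAux.uf; rw [dif_pos hkn]; exact hy _
              refine hIcc h1 h0I ?_ hd0
              have := hy0' (k + 1); rw [hd]; linarith
            set T : Finset (Fin n) := (SUp σ (k + 1))ᶜ with hT
            have hpt : ∀ j, max (y j) (ChoquetAux.uf σ y k) =
                max (y j) (ChoquetAux.uf σ y (k + 1)) + indTuple T d j := by
              intro j
              have hjlt := (σ.symm j).isLt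
              by_cases hjk : ((σ.symm j : Fin n) : ℕ) ≤ k
              · have hmem : j ∈ T := by
                  rw [hT, Finset.mem_compl]
                  intro h
                  have := ChoquetAux.mem_SUp.1 h
                  omega
                have h1 : y j ≤ ChoquetAux.uf σ y k := hlef y hmy j k hkn hjk
                have h2 : y j ≤ ChoquetAux.uf σ y (k + 1) := by
                  by_cases h : k + 1 < n
                  · exact hlef y hmy j (k + 1) h (by omega)
                  · have hzz : ChoquetAux.uf σ y (k + 1) = 0 := by
                      unfold ChoquetAux.uf; rw [dif_neg h]
                    rw [hzz]; exact hy0 j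
                rw [max_eq_right h1, max_eq_right h2]
                simp only [indTuple, if_pos hmem, hd]
                ring
              · have hmem : j ∉ T := by
                  rw [hT, Finset.mem_compl, not_not]
                  exact ChoquetAux.mem_SUp.2 (by omega)
                have h1 : ChoquetAux.uf σ y k ≤ y j := hufle y hmy j k hkn (by omega)
                have h2 : ChoquetAux.uf σ y (k + 1) ≤ y j :=
                  hufle y hmy j (k + 1) (by omega) (by omega)
                rw [max_eq_left h1, max_eq_left h2]
                simp only [indTuple, if_neg hmem, add_zero]
            have mem1 : ∀ i, max (y i) (ChoquetAux.uf σ y (k + 1)) ∈ I := fun i =>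
              hIcc (hy i) h0I (le_max_left _ _) (max_le (hy0 i) (hy0' (k + 1)))
            have mono1 : Monotone ((fun j => max (y j) (ChoquetAux.uf σ y (k + 1))) ∘ σ) :=
              Monotone.max hmy monotone_const
            have mem2 : ∀ i, indTuple T d i ∈ I := ind_mem _ _ hdI
            have mono2 : Monotone (indTuple T d ∘ σ) := by
              intro i j hij
              simp only [Function.comp_apply, indTuple]
              have e : ∀ m : Fin n, (σ m ∈ T) ↔ (m : ℕ) < k + 1 := by
                intro m
                rw [hT, Finset.mem_compl, ChoquetAux.mem_SUp, Equiv.symm_apply_apply]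
                omega
              have hijn : (i : ℕ) ≤ (j : ℕ) := hij
              by_cases h1 : (j : ℕ) < k + 1
              · rw [if_pos ((e j).2 h1), if_pos ((e i).2 (by omega))]
              · by_cases h2 : (i : ℕ) < k + 1
                · rw [if_pos ((e i).2 h2), if_neg (fun h => h1 ((e j).1 h))]
                  exact hd0
                · rw [if_neg (fun h => h2 ((e i).1 h)), if_neg (fun h => h1 ((e j).1 h))]
            have memsum : ∀ i,
                (fun j => max (y j) (ChoquetAux.uf σ y (k + 1))) i + indTuple T d i ∈ I := by
              intro i
              rw [← hpt i]
              exact hIcc (hy i) h0I (le_max_left _ _) (max_le (hy0 i) (hy0' k))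
            have hadd := addf σ _ _ mem1 mem2 mono1 mono2 memsum
            have hfun : (fun j => max (y j) (ChoquetAux.uf σ y k)) =
                (fun i => (fun j => max (y j) (ChoquetAux.uf σ y (k + 1))) i + indTuple T d i) := by
              funext j; exact hpt j
            have hP2 := P2 T d hdI hd0
            have hTc : Tᶜ = SUp σ (k + 1) := by rw [hT, compl_compl]
            rw [ih (by omega), hfun, hadd, hP2, hTc, Finset.sum_range_succ, hd]
            ring
        have hfin := key n le_rfl
        have hz : (fun j => max (y j) (ChoquetAux.uf σ y n)) = fun _ => (0 : ℝ) := by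
          funext j
          have h1 : ChoquetAux.uf σ y n = 0 := by
            unfold ChoquetAux.uf; rw [dif_neg (lt_irrefl n)]
          rw [h1]
          exact max_eq_right (hy0 j)
        rw [hz, hf0, zero_add] at hfin
        exact hfin
      -- assemble
      have hxm_mem : ∀ i, min (x i) 0 ∈ I := by
        intro i; rcases le_total (x i) 0 with h | h
        · rw [min_eq_left h]; exact hx i
        · rw [min_eq_right h]; exact h0I
      have hxp_mem : ∀ i, max (x i) 0 ∈ I := by
        intro i; rcases le_total (x i) 0 with h | h
        · rw [max_eq_right h]; exact h0I
        · rw [max_eq_left h]; exact hx i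
      have hmxm : Monotone ((fun j => min (x j) 0) ∘ σ) := Monotone.min hmx monotone_const
      have hmxp : Monotone ((fun j => max (x j) 0) ∘ σ) := Monotone.max hmx monotone_const
      have hsum : ∀ i, (fun j => min (x j) 0) i + (fun j => max (x j) 0) i ∈ I := by
        intro i; simp only; rw [min_add_max]; simpa using hx i
      have hdecomp := addf σ _ _ hxm_mem hxp_mem hmxm hmxp hsum
      have hxe : (fun i => (fun j => min (x j) 0) i + (fun j => max (x j) 0) i) = x := by
        funext i; simp only; rw [min_add_max, add_zero]
      rw [hxe] at hdecomp
      have hNP := NP (fun j => min (x j) 0) hxm_mem hmxm (fun i => min_le_right _ _)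
      have hNN := NN (fun j => max (x j) 0) hxp_mem hmxp (fun i => le_max_right _ _)
      have ha_n : v (SUp σ n) = 0 := by rw [ChoquetAux.SUp_n]; exact hv0
      have hNN' : f (fun j => max (x j) 0) =
          ∑ k ∈ Finset.range n, ChoquetAux.uf σ (fun j => max (x j) 0) k *
            (v (SUp σ k) - v (SUp σ (k + 1))) := by
        rw [hNN]
        exact (ChoquetAux.abel1 (ChoquetAux.uf σ (fun j => max (x j) 0))
          (fun k => v (SUp σ k)) n ha_n).symm
      have hu_n : ChoquetAux.uf σ (fun j => min (x j) 0) n = 0 := by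
        unfold ChoquetAux.uf; rw [dif_neg (lt_irrefl n)]
      have hNP' : f (fun j => min (x j) 0) =
          ∑ k ∈ Finset.range n, ChoquetAux.uf σ (fun j => min (x j) 0) k *
            (v (SUp σ k) - v (SUp σ (k + 1))) := by
        rw [hNP, show (Finset.univ : Finset (Fin n)) = SUp σ 0 from (ChoquetAux.SUp_zero σ).symm]
        exact ChoquetAux.abel2 (ChoquetAux.uf σ (fun j => min (x j) 0))
          (fun k => v (SUp σ k)) n hu_n
      have hfinal : (∑ i : Fin n, x (σ i) * (v (SUp σ (i : ℕ)) - v (SUp σ ((i : ℕ) + 1)))) =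
          ∑ k ∈ Finset.range n, ChoquetAux.uf σ x k * (v (SUp σ k) - v (SUp σ (k + 1))) := by
        rw [← Fin.sum_univ_eq_sum_range
          (fun k => ChoquetAux.uf σ x k * (v (SUp σ k) - v (SUp σ (k + 1)))) n]
        apply Finset.sum_congr rfl
        intro i _
        congr 1
        unfold ChoquetAux.uf
        rw [dif_pos i.isLt]
      have hterm : ∀ k ∈ Finset.range n,
          ChoquetAux.uf σ (fun j => min (x j) 0) k * (v (SUp σ k) - v (SUp σ (k + 1))) +
            ChoquetAux.uf σ (fun j => max (x j) 0) k * (v (SUp σ k) - v (SUp σ (k + 1))) =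
          ChoquetAux.uf σ x k * (v (SUp σ k) - v (SUp σ (k + 1))) := by
        intro k _
        have hmm : ChoquetAux.uf σ (fun j => min (x j) 0) k +
            ChoquetAux.uf σ (fun j => max (x j) 0) k = ChoquetAux.uf σ x k := by
          by_cases h : k < n <;> simp [ChoquetAux.uf, h, min_add_max]
        rw [← hmm]; ring
      rw [hdecomp, hNP', hNN', ← Finset.sum_add_distrib, Finset.sum_congr rfl hterm]
      exact hfinal.symm
    -- ===== construct v =====
    by_cases hpos : ∃ e ∈ I, 0 < e
    · obtain ⟨e, heI, he0⟩ := hpos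
      set v : Finset (Fin n) → ℝ := fun S => f (indTuple S e) / e with hvdef
      have hv0 : v ∅ = 0 := by
        simp only [hvdef]
        rw [ind_empty, hf0, zero_div]
      have P1 : ∀ (S : Finset (Fin n)) (c : ℝ), c ∈ I → 0 ≤ c →
          f (indTuple S c) = c * v S := by
        intro S c hcI hc0
        rcases eq_or_lt_of_le hc0 with h | h
        · rw [← h, ind_zero, hf0]; ring
        · have hs := slope_pos S c e hcI heI h he0
          simp only [hvdef]
          field_simp
          linarith
      have Pconst : ∀ dd : ℝ, dd ∈ I → dd < 0 →
          f (indTuple Finset.univ dd) = dd * v Finset.univ := by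
        intro dd hddI hdd0
        have hed : (0 : ℝ) < e - dd := by linarith
        have hedne : e - dd ≠ 0 := ne_of_gt hed
        set t : ℝ := (-dd) / (e - dd) with htdef
        have ht0 : 0 ≤ t := by rw [htdef]; exact div_nonneg (by linarith) (le_of_lt hed)
        have ht1 : t ≤ 1 := by rw [htdef, div_le_one hed]; linarith
        have hmce : Monotone (indTuple Finset.univ e ∘ (Equiv.refl (Fin n))) := by
          intro i j _
          simp [indTuple]
        have hmcd : Monotone (indTuple Finset.univ dd ∘ (Equiv.refl (Fin n))) := by
          intro i j _
          simp [indTuple]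
        have hcomb := H t ⟨ht0, ht1⟩ (Equiv.refl (Fin n)) (indTuple Finset.univ e)
          (indTuple Finset.univ dd) (ind_mem _ _ heI) (ind_mem _ _ hddI) hmce hmcd
        have hzf : (fun i : Fin n => t * indTuple Finset.univ e i +
            (1 - t) * indTuple Finset.univ dd i) = fun _ => (0 : ℝ) := by
          funext i
          simp only [indTuple, Finset.mem_univ, if_true, htdef]
          field_simp
          ring
        rw [hzf, hf0] at hcomb
        have h1t : 1 - t = e / (e - dd) := by
          rw [htdef]
          field_simp
          ring
        rw [h1t, htdef] at hcomb
        simp only [hvdef]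
        have hkey : 0 = (-dd) * f (indTuple Finset.univ e) + e * f (indTuple Finset.univ dd) := by
          have h2 := congrArg (fun z : ℝ => z * (e - dd)) hcomb
          simp only [zero_mul, add_mul] at h2
          have h3 : ∀ a F : ℝ, a / (e - dd) * F * (e - dd) = a * F := by
            intro a F
            field_simp
          rw [h3, h3] at h2
          linarith [h2]
        field_simp
        linarith
      have P2 : ∀ (T : Finset (Fin n)) (d : ℝ), d ∈ I → d ≤ 0 →
          f (indTuple T d) = d * (v Finset.univ - v Tᶜ) := by
        intro T d hdI hd0
        rcases eq_or_lt_of_le hd0 with h | h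
        · rw [h, ind_zero, hf0]; ring
        · set c0 : ℝ := e / 2 with hc0def
          have hc0pos : 0 < c0 := by rw [hc0def]; linarith
          set dd : ℝ := max d (-(e / 2)) with hdddef
          have hdd0 : dd < 0 := by rw [hdddef]; exact max_lt h (by linarith)
          have hddI : dd ∈ I := hIcc hdI h0I (le_max_left _ _) (le_of_lt hdd0)
          have hc0I : c0 ∈ I := hIcc h0I heI (le_of_lt hc0pos) (by rw [hc0def]; linarith)
          have hddlb : -(e / 2) ≤ dd := by rw [hdddef]; exact le_max_right _ _
          have hcdI : c0 - dd ∈ I := by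
            refine hIcc h0I heI (by linarith) (by rw [hc0def]; linarith)
          set w : Fin n → ℝ := fun j => if j ∈ T then dd else c0 with hwdef
          set σT := Tuple.sort w with hsT
          have hwm : Monotone (w ∘ σT) := Tuple.monotone_sort w
          have hTprop : ∀ i j : Fin n, i ≤ j → σT j ∈ T → σT i ∈ T := by
            intro i j hij hj
            by_contra hi
            have h1 := hwm hij
            simp only [Function.comp_apply, hwdef, if_pos hj, if_neg hi] at h1
            linarith
          have hmono_ind : ∀ p q : ℝ, p ≤ q →
              Monotone ((fun j => if j ∈ T then p else q) ∘ σT) := by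
            intro p q hpq i j hij
            simp only [Function.comp_apply]
            by_cases hj : σT j ∈ T
            · rw [if_pos (hTprop i j hij hj), if_pos hj]
            · by_cases hi : σT i ∈ T
              · rw [if_pos hi, if_neg hj]; exact hpq
              · rw [if_neg hi, if_neg hj]
          have f1 : indTuple T dd = fun j => if j ∈ T then dd else 0 := rfl
          have f2 : indTuple Tᶜ c0 = fun j => if j ∈ T then 0 else c0 := by
            funext j
            by_cases hj : j ∈ T <;> simp [indTuple, hj]
          have f3 : indTuple Tᶜ (c0 - dd) = fun j => if j ∈ T then 0 else c0 - dd := by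
            funext j
            by_cases hj : j ∈ T <;> simp [indTuple, hj]
          have f4 : indTuple Finset.univ dd = fun j => if j ∈ T then dd else dd := by
            funext j
            by_cases hj : j ∈ T <;> simp [indTuple, hj]
          have mA := addf σT (indTuple T dd) (indTuple Tᶜ c0)
            (ind_mem _ _ hddI) (ind_mem _ _ hc0I)
            (by rw [f1]; exact hmono_ind dd 0 (le_of_lt hdd0))
            (by rw [f2]; exact hmono_ind 0 c0 (le_of_lt hc0pos))
            (by intro i; by_cases hi : i ∈ T <;> simp [indTuple, hi] <;> assumption)
          have mB := addf σT (indTuple Finset.univ dd) (indTuple Tᶜ (c0 - dd))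
            (ind_mem _ _ hddI) (ind_mem _ _ hcdI)
            (by rw [f4]; exact hmono_ind dd dd le_rfl)
            (by rw [f3]; exact hmono_ind 0 (c0 - dd) (by linarith))
            (by intro i; by_cases hi : i ∈ T <;> simp [indTuple, hi]
                · assumption
                · exact hIcc h0I heI (by linarith) (by rw [hc0def]; linarith))
          have hsums : (fun i => indTuple T dd i + indTuple Tᶜ c0 i)
              = (fun i => indTuple Finset.univ dd i + indTuple Tᶜ (c0 - dd) i) := by
            funext i
            by_cases hi : i ∈ T <;> simp [indTuple, hi] <;> ring
          have hkey : f (indTuple T dd) + f (indTuple Tᶜ c0) =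
              f (indTuple Finset.univ dd) + f (indTuple Tᶜ (c0 - dd)) := by
            rw [← mA, ← mB, hsums]
          rw [P1 Tᶜ c0 hc0I (le_of_lt hc0pos), P1 Tᶜ (c0 - dd) hcdI (by linarith),
            Pconst dd hddI hdd0] at hkey
          have hdd_eq : f (indTuple T dd) = dd * (v Finset.univ - v Tᶜ) := by
            have : dd * (v Finset.univ - v Tᶜ) =
                dd * v Finset.univ + (c0 - dd) * v Tᶜ - c0 * v Tᶜ := by ring
            rw [this]
            linarith
          have hsl := slope_neg T d dd hdI hddI h hdd0
          rw [hdd_eq] at hsl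
          have hddne : dd ≠ 0 := ne_of_lt hdd0
          have h2 : dd * (v Finset.univ - v Tᶜ) * d =
              (d * (v Finset.univ - v Tᶜ)) * dd := by ring
          rw [h2] at hsl
          exact mul_right_cancel₀ hddne hsl
      exact main v hv0 P1 P2
    · push_neg at hpos
      have haneg : aa < 0 := lt_of_lt_of_le haabb (hpos bb hbbI)
      have hane : aa ≠ 0 := ne_of_lt haneg
      set v : Finset (Fin n) → ℝ := fun S => if S = ∅ then 0 else
        f (indTuple Finset.univ aa) / aa - f (indTuple Sᶜ aa) / aa with hvdef
      have hv0 : v ∅ = 0 := by simp [hvdef]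
      have huniv_ne : (Finset.univ : Finset (Fin n)) ≠ ∅ := by
        have : (⟨0, hn⟩ : Fin n) ∈ (Finset.univ : Finset (Fin n)) := Finset.mem_univ _
        intro hcon
        rw [hcon] at this
        exact Finset.notMem_empty _ this
      have hvu : v Finset.univ = f (indTuple Finset.univ aa) / aa := by
        simp only [hvdef, if_neg huniv_ne, Finset.compl_univ]
        rw [ind_empty, hf0, zero_div, sub_zero]
      have P1 : ∀ (S : Finset (Fin n)) (c : ℝ), c ∈ I → 0 ≤ c →
          f (indTuple S c) = c * v S := by
        intro S c hcI hc0
        have hc : c = 0 := le_antisymm (hpos c hcI) hc0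
        rw [hc, ind_zero, hf0]
        ring
      have P2 : ∀ (T : Finset (Fin n)) (d : ℝ), d ∈ I → d ≤ 0 →
          f (indTuple T d) = d * (v Finset.univ - v Tᶜ) := by
        intro T d hdI hd0
        rcases eq_or_lt_of_le hd0 with h | h
        · rw [h, ind_zero, hf0]; ring
        · have hsl := slope_neg T d aa hdI haaI h haneg
          by_cases hTc : Tᶜ = ∅
          · have hT : T = Finset.univ := by
              have h2 := congrArg (fun S : Finset (Fin n) => Sᶜ) hTc
              simpa using h2
            subst hT
            rw [Finset.compl_univ, hv0, sub_zero, hvu]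
            field_simp
            linarith [hsl]
          · have hvTc : v Tᶜ = f (indTuple Finset.univ aa) / aa - f (indTuple T aa) / aa := by
              simp only [hvdef, if_neg hTc, compl_compl]
            rw [hvu, hvTc]
            have heq : f (indTuple T d) = d * (f (indTuple T aa) / aa) := by
              field_simp
              linarith [hsl]
            rw [heq]
            ring
      exact main v hv0 P1 P2
end

section
/- Assume [0,1] ⊆ I ⊆ ℝ₊ or I = ℝ. A function f : Iⁿ → ℝ is a signed Choquet integral if and only if: (i) f is comonotonically additive or horizontally min-additive (and, when I = ℝ, horizontal max-additivity may also be used in place of these), and (ii) f(c·x·1_S) = c·f(x·1_S) for all x ∈ I and all c > 0 such that c·x ∈ I, and all S ⊆ X. -/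
section Aux
variable {n : ℕ}

lemma mem_SUp (σ : Equiv.Perm (Fin n)) (k : ℕ) (j : Fin n) :
    j ∈ SUp σ k ↔ k ≤ ((σ.symm j : Fin n) : ℕ) := by
  simp only [SUp, Finset.mem_image, Finset.mem_filter, Finset.mem_univ, true_and]
  constructor
  · rintro ⟨p, hp, rfl⟩; simpa using hp
  · intro h; exact ⟨σ.symm j, h, σ.apply_symm_apply j⟩

lemma SUp_zero (σ : Equiv.Perm (Fin n)) : SUp σ 0 = Finset.univ := by
  ext j; simp [mem_SUp]

lemma SUp_of_le (σ : Equiv.Perm (Fin n)) {k : ℕ} (h : n ≤ k) : SUp σ k = ∅ := by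
  ext j
  simp only [mem_SUp, Finset.notMem_empty, iff_false]
  have := (σ.symm j).isLt
  omega

lemma indTuple_emptyset (r : ℝ) : indTuple (∅ : Finset (Fin n)) r = fun _ => 0 := by
  funext j; simp [indTuple]

lemma indTuple_zero (S : Finset (Fin n)) : indTuple S (0:ℝ) = fun _ => 0 := by
  funext j; simp [indTuple]

lemma indTuple_univ (r : ℝ) : indTuple (Finset.univ : Finset (Fin n)) r = fun _ => r := by
  funext j; simp [indTuple]

lemma abel_sum (a w : ℕ → ℝ) (m : ℕ) (hw : w m = 0) :
    ∑ i ∈ Finset.range m, (a i - if i = 0 then 0 else a (i - 1)) * w i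
      = ∑ i ∈ Finset.range m, a i * (w i - w (i + 1)) := by
  have key : ∑ i ∈ Finset.range m, (if i = 0 then (0:ℝ) else a (i-1)) * w i
      = ∑ i ∈ Finset.range m, a i * w (i+1) := by
    have h1 := Finset.sum_range_succ' (fun i => (if i = 0 then (0:ℝ) else a (i-1)) * w i) m
    have h2 := Finset.sum_range_succ (fun i => (if i = 0 then (0:ℝ) else a (i-1)) * w i) m
    rw [h2] at h1
    have hgm : (if m = 0 then (0:ℝ) else a (m-1)) * w m = 0 := by rw [hw]; ring
    have hg0 : (if (0:ℕ) = 0 then (0:ℝ) else a (0-1)) * w 0 = 0 := by norm_num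
    rw [hgm, hg0, add_zero, add_zero] at h1
    rw [h1]
    refine Finset.sum_congr rfl (fun i _ => ?_)
    simp
  calc ∑ i ∈ Finset.range m, (a i - if i = 0 then 0 else a (i - 1)) * w i
      = ∑ i ∈ Finset.range m,
          (a i * w i - (if i = 0 then (0:ℝ) else a (i-1)) * w i) :=
        Finset.sum_congr rfl (fun i _ => by ring)
    _ = (∑ i ∈ Finset.range m, a i * w i)
          - ∑ i ∈ Finset.range m, (if i = 0 then (0:ℝ) else a (i-1)) * w i :=
        Finset.sum_sub_distrib _ _
    _ = (∑ i ∈ Finset.range m, a i * w i) - ∑ i ∈ Finset.range m, a i * w (i+1) := by rw [key]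
    _ = _ := by rw [← Finset.sum_sub_distrib]; exact Finset.sum_congr rfl (fun i _ => by ring)

noncomputable def xsl (hn : 0 < n) (σ : Equiv.Perm (Fin n)) (x : Fin n → ℝ) : ℕ → ℝ :=
  fun k => x (σ ⟨min k (n-1), by omega⟩)

lemma xsl_def (hn : 0 < n) (σ : Equiv.Perm (Fin n)) (x : Fin n → ℝ) (k : ℕ) :
    xsl hn σ x k = x (σ ⟨min k (n-1), by omega⟩) := rfl

lemma xsl_mem (hn : 0 < n) (σ : Equiv.Perm (Fin n)) (x : Fin n → ℝ) {I : Set ℝ}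
    (hx : ∀ i, x i ∈ I) (k : ℕ) : xsl hn σ x k ∈ I := by
  rw [xsl_def]; exact hx _

lemma xsl_eq (hn : 0 < n) (σ : Equiv.Perm (Fin n)) (x : Fin n → ℝ) (j : Fin n) :
    xsl hn σ x (j : ℕ) = x (σ j) := by
  rw [xsl_def]
  have h : (⟨min (j:ℕ) (n-1), by omega⟩ : Fin n) = j := by
    apply Fin.ext
    have := j.isLt
    simp only [Fin.val_mk]
    omega
  rw [h]

lemma xsl_mono (hn : 0 < n) (σ : Equiv.Perm (Fin n)) (x : Fin n → ℝ)
    (hm : Monotone (x ∘ σ)) : Monotone (xsl hn σ x) := by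
  intro a b hab
  exact hm (show (⟨min a (n-1), by omega⟩ : Fin n) ≤ ⟨min b (n-1), by omega⟩ from by
    simp [Fin.le_def]; omega)

lemma xsl_symm (hn : 0 < n) (σ : Equiv.Perm (Fin n)) (x : Fin n → ℝ) (j : Fin n) :
    x j = xsl hn σ x ((σ.symm j : Fin n) : ℕ) := by
  rw [xsl_eq]; simp

noncomputable def dl (hn : 0 < n) (σ : Equiv.Perm (Fin n)) (x : Fin n → ℝ) : ℕ → ℝ :=
  fun k => xsl hn σ x k - if k = 0 then 0 else xsl hn σ x (k-1)

end Aux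


section Layer
variable {n : ℕ}

lemma layer_comon (hn : 0 < n) (I : Set ℝ) (hI : I.OrdConnected) (h0 : (0:ℝ) ∈ I)
    (f : (Fin n → ℝ) → ℝ) (hadd : ComonAdditiveOn I f)
    (hom' : ∀ S : Finset (Fin n), ∀ r ∈ I, 0 ≤ r → f (indTuple S r) = r * f (indTuple S 1))
    (σ : Equiv.Perm (Fin n)) (x : Fin n → ℝ) (hx : ∀ i, x i ∈ I)
    (hmono : Monotone (x ∘ σ)) (hpos : 0 ≤ xsl hn σ x 0) :
    ∀ k, k < n →
      f (fun j => min (x j) (xsl hn σ x k))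
        = ∑ i ∈ Finset.range (k+1), dl hn σ x i * f (indTuple (SUp σ i) 1) := by
  have hxsm : Monotone (xsl hn σ x) := xsl_mono hn σ x hmono
  have hxsnn : ∀ k, 0 ≤ xsl hn σ x k := fun k => hpos.trans (hxsm (Nat.zero_le k))
  have hxj : ∀ j : Fin n, x j = xsl hn σ x ((σ.symm j : Fin n) : ℕ) :=
    fun j => xsl_symm hn σ x j
  have hxnn : ∀ j, 0 ≤ x j := fun j => by rw [hxj j]; exact hxsnn _
  have hxsI : ∀ k, xsl hn σ x k ∈ I := xsl_mem hn σ x hx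
  intro k
  induction k with
  | zero =>
    intro _
    have he : (fun j => min (x j) (xsl hn σ x 0)) = indTuple (SUp σ 0) (xsl hn σ x 0) := by
      funext j
      have h : xsl hn σ x 0 ≤ x j := by rw [hxj j]; exact hxsm (Nat.zero_le _)
      simp [indTuple, SUp_zero, min_eq_right h]
    rw [he, hom' _ _ (hxsI 0) (hxsnn 0), Finset.sum_range_one]
    simp [dl]
  | succ k IH =>
    intro hk1
    have IHk := IH (by omega)
    have hdeq : dl hn σ x (k+1) = xsl hn σ x (k+1) - xsl hn σ x k := by simp [dl]
    have hdnn : 0 ≤ dl hn σ x (k+1) := by rw [hdeq]; exact sub_nonneg.mpr (hxsm (by omega))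
    have hdI : dl hn σ x (k+1) ∈ I := by
      rw [hdeq]
      exact hI.out h0 (hxsI (k+1)) ⟨sub_nonneg.mpr (hxsm (by omega)), by linarith [hxsnn k]⟩
    set a : Fin n → ℝ := fun j => min (x j) (xsl hn σ x k) with ha
    set b : Fin n → ℝ := indTuple (SUp σ (k+1)) (dl hn σ x (k+1)) with hb
    have hsum_eq : (fun j => a j + b j) = fun j => min (x j) (xsl hn σ x (k+1)) := by
      funext j
      by_cases hp : k+1 ≤ ((σ.symm j : Fin n) : ℕ)
      · have h1 : a j = xsl hn σ x k := min_eq_right (by rw [hxj j]; exact hxsm (by omega))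
        have h2 : min (x j) (xsl hn σ x (k+1)) = xsl hn σ x (k+1) :=
          min_eq_right (by rw [hxj j]; exact hxsm hp)
        have h3 : b j = dl hn σ x (k+1) := by
          rw [hb]; unfold indTuple; rw [if_pos ((mem_SUp σ (k+1) j).mpr hp)]
        rw [h1, h2, h3, hdeq]; ring
      · have hple : ((σ.symm j : Fin n) : ℕ) ≤ k := by omega
        have h1 : a j = x j := min_eq_left (by rw [hxj j]; exact hxsm hple)
        have h2 : min (x j) (xsl hn σ x (k+1)) = x j :=
          min_eq_left (by rw [hxj j]; exact hxsm (by omega))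
        have h3 : b j = 0 := by
          rw [hb]; unfold indTuple; rw [if_neg (fun hc => hp ((mem_SUp σ (k+1) j).mp hc))]
        rw [h1, h2, h3]; ring
    have haI : ∀ j, a j ∈ I := fun j =>
      hI.out h0 (hx j) ⟨le_min (hxnn j) (hxsnn k), min_le_left _ _⟩
    have hbI : ∀ j, b j ∈ I := fun j => by
      rw [hb]; unfold indTuple
      split
      · exact hdI
      · exact h0
    have hsI : ∀ j, a j + b j ∈ I := fun j => by
      rw [show a j + b j = min (x j) (xsl hn σ x (k+1)) from congrFun hsum_eq j]
      exact hI.out h0 (hx j) ⟨le_min (hxnn j) (hxsnn (k+1)), min_le_left _ _⟩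
    have hma : Monotone (a ∘ σ) := fun u u' hu => by
      simp only [Function.comp_apply, ha]
      exact min_le_min (hmono hu) le_rfl
    have hmb : Monotone (b ∘ σ) := fun u u' hu => by
      have hu' : (u : ℕ) ≤ (u' : ℕ) := hu
      simp only [Function.comp_apply, hb]
      unfold indTuple
      simp only [mem_SUp, Equiv.symm_apply_apply]
      by_cases h1 : k+1 ≤ (u:ℕ)
      · rw [if_pos h1, if_pos (le_trans h1 hu')]
      · by_cases h2 : k+1 ≤ (u':ℕ)
        · rw [if_neg h1, if_pos h2]; exact hdnn
        · rw [if_neg h1, if_neg h2]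
    have key := hadd a b haI hbI ⟨σ, hma, hmb⟩ hsI
    rw [hsum_eq] at key
    rw [Finset.sum_range_succ (fun i => dl hn σ x i * f (indTuple (SUp σ i) 1)) (k+1),
      ← IHk, ← hom' _ _ hdI hdnn, ← hb]
    exact key

lemma layer_comon_total (hn : 0 < n) (I : Set ℝ) (hI : I.OrdConnected) (h0 : (0:ℝ) ∈ I)
    (f : (Fin n → ℝ) → ℝ) (hadd : ComonAdditiveOn I f)
    (hom' : ∀ S : Finset (Fin n), ∀ r ∈ I, 0 ≤ r → f (indTuple S r) = r * f (indTuple S 1))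
    (σ : Equiv.Perm (Fin n)) (x : Fin n → ℝ) (hx : ∀ i, x i ∈ I)
    (hmono : Monotone (x ∘ σ)) (hpos : 0 ≤ xsl hn σ x 0) :
    f x = ∑ i ∈ Finset.range n, dl hn σ x i * f (indTuple (SUp σ i) 1) := by
  have h := layer_comon hn I hI h0 f hadd hom' σ x hx hmono hpos (n-1) (by omega)
  have hxsm : Monotone (xsl hn σ x) := xsl_mono hn σ x hmono
  have hxeq : (fun j => min (x j) (xsl hn σ x (n-1))) = x := by
    funext j
    refine min_eq_left ?_
    rw [xsl_symm hn σ x j]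
    exact hxsm (by have := (σ.symm j).isLt; omega)
  rw [hxeq] at h
  rw [h, Nat.sub_add_cancel hn]

lemma layer_hmin_total (hn : 0 < n) (I : Set ℝ) (hI : I.OrdConnected) (h0 : (0:ℝ) ∈ I)
    (f : (Fin n → ℝ) → ℝ) (hf0 : f (fun _ => 0) = 0) (hmin : HorizMinAdditiveOn I f)
    (hom' : ∀ S : Finset (Fin n), ∀ r ∈ I, 0 ≤ r → f (indTuple S r) = r * f (indTuple S 1))
    (σ : Equiv.Perm (Fin n)) (x : Fin n → ℝ) (hx : ∀ i, x i ∈ I)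
    (hmono : Monotone (x ∘ σ)) (hpos : 0 ≤ xsl hn σ x 0) :
    f x = ∑ i ∈ Finset.range n, dl hn σ x i * f (indTuple (SUp σ i) 1) := by
  have hxsm : Monotone (xsl hn σ x) := xsl_mono hn σ x hmono
  have hxsnn : ∀ k, 0 ≤ xsl hn σ x k := fun k => hpos.trans (hxsm (Nat.zero_le k))
  have hxj : ∀ j : Fin n, x j = xsl hn σ x ((σ.symm j : Fin n) : ℕ) :=
    fun j => xsl_symm hn σ x j
  have hxnn : ∀ j, 0 ≤ x j := fun j => by rw [hxj j]; exact hxsnn _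
  have hxsI : ∀ k, xsl hn σ x k ∈ I := xsl_mem hn σ x hx
  have claim : ∀ k, k < n →
      f x = (∑ i ∈ Finset.range (k+1), dl hn σ x i * f (indTuple (SUp σ i) 1))
        + f (fun j => x j - min (x j) (xsl hn σ x k)) := by
    intro k
    induction k with
    | zero =>
      intro _
      have hle : ∀ j, xsl hn σ x 0 ≤ x j := fun j => by
        rw [hxj j]; exact hxsm (Nat.zero_le _)
      have hres : ∀ i, x i - min (x i) (xsl hn σ x 0) ∈ I := fun i => by
        rw [min_eq_right (hle i)]
        exact hI.out h0 (hx i) ⟨by linarith [hxsnn 0, hle i], by linarith [hxsnn 0]⟩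
      have key := hmin x hx (xsl hn σ x 0) (hxsI 0) hres
      have he : (fun i => min (x i) (xsl hn σ x 0)) = indTuple (SUp σ 0) (xsl hn σ x 0) := by
        funext j
        simp [indTuple, SUp_zero, min_eq_right (hle j)]
      rw [he, hom' _ _ (hxsI 0) (hxsnn 0)] at key
      rw [key, Finset.sum_range_one]
      simp [dl]
    | succ k IH =>
      intro hk1
      have IHk := IH (by omega)
      have hdeq : dl hn σ x (k+1) = xsl hn σ x (k+1) - xsl hn σ x k := by simp [dl]
      have hdnn : 0 ≤ dl hn σ x (k+1) := by rw [hdeq]; exact sub_nonneg.mpr (hxsm (by omega))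
      have hdI : dl hn σ x (k+1) ∈ I := by
        rw [hdeq]
        exact hI.out h0 (hxsI (k+1)) ⟨sub_nonneg.mpr (hxsm (by omega)), by linarith [hxsnn k]⟩
      set yk : Fin n → ℝ := fun j => x j - min (x j) (xsl hn σ x k) with hyk
      have pt : ∀ j : Fin n,
          min (yk j) (dl hn σ x (k+1)) = indTuple (SUp σ (k+1)) (dl hn σ x (k+1)) j ∧
          yk j - min (yk j) (dl hn σ x (k+1)) = x j - min (x j) (xsl hn σ x (k+1)) := by
        intro j
        by_cases hp : k+1 ≤ ((σ.symm j : Fin n) : ℕ)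
        · have hk' : xsl hn σ x k ≤ x j := by rw [hxj j]; exact hxsm (by omega)
          have hk1' : xsl hn σ x (k+1) ≤ x j := by rw [hxj j]; exact hxsm hp
          have h1 : yk j = x j - xsl hn σ x k := by rw [hyk]; simp [min_eq_right hk']
          have h2 : min (yk j) (dl hn σ x (k+1)) = dl hn σ x (k+1) := by
            rw [h1, hdeq]; exact min_eq_right (by linarith)
          refine ⟨?_, ?_⟩
          · rw [h2]; unfold indTuple; rw [if_pos ((mem_SUp σ (k+1) j).mpr hp)]
          · rw [h2, h1, hdeq, min_eq_right hk1']; ring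
        · have hple : ((σ.symm j : Fin n) : ℕ) ≤ k := by omega
          have hk' : x j ≤ xsl hn σ x k := by rw [hxj j]; exact hxsm hple
          have hk1' : x j ≤ xsl hn σ x (k+1) := by rw [hxj j]; exact hxsm (by omega)
          have h1 : yk j = 0 := by rw [hyk]; simp [min_eq_left hk']
          refine ⟨?_, ?_⟩
          · rw [h1]; unfold indTuple
            rw [if_neg (fun hc => hp ((mem_SUp σ (k+1) j).mp hc))]
            exact min_eq_left hdnn
          · rw [h1, min_eq_left hdnn, min_eq_left hk1']; ring
      have hykI : ∀ j, yk j ∈ I := fun j => by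
        rw [hyk]
        refine hI.out h0 (hx j) ⟨?_, ?_⟩
        · simp only []
          have : min (x j) (xsl hn σ x k) ≤ x j := min_le_left _ _
          linarith
        · have : 0 ≤ min (x j) (xsl hn σ x k) := le_min (hxnn j) (hxsnn k)
          simp only []
          linarith
      have hresI : ∀ i, yk i - min (yk i) (dl hn σ x (k+1)) ∈ I := fun i => by
        rw [(pt i).2]
        refine hI.out h0 (hx i) ⟨?_, ?_⟩
        · have : min (x i) (xsl hn σ x (k+1)) ≤ x i := min_le_left _ _
          linarith
        · have : 0 ≤ min (x i) (xsl hn σ x (k+1)) := le_min (hxnn i) (hxsnn (k+1))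
          linarith
      have key := hmin yk hykI (dl hn σ x (k+1)) hdI hresI
      have e1 : (fun i => min (yk i) (dl hn σ x (k+1)))
          = indTuple (SUp σ (k+1)) (dl hn σ x (k+1)) := funext fun j => (pt j).1
      have e2 : (fun i => yk i - min (yk i) (dl hn σ x (k+1)))
          = fun j => x j - min (x j) (xsl hn σ x (k+1)) := funext fun j => (pt j).2
      rw [e1, e2, hom' _ _ hdI hdnn] at key
      rw [IHk, key, Finset.sum_range_succ (fun i => dl hn σ x i * f (indTuple (SUp σ i) 1)) (k+1)]
      ring
  have h := claim (n-1) (by omega)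
  have hxeq : (fun j => x j - min (x j) (xsl hn σ x (n-1))) = fun _ => (0:ℝ) := by
    funext j
    have : min (x j) (xsl hn σ x (n-1)) = x j := min_eq_left (by
      rw [xsl_symm hn σ x j]
      exact hxsm (by have := (σ.symm j).isLt; omega))
    rw [this]; ring
  rw [hxeq, hf0, add_zero] at h
  rw [h, Nat.sub_add_cancel hn]

end Layer


section MainAux
variable {n : ℕ}

lemma backward_main (hn : 0 < n) (I : Set ℝ) (f : (Fin n → ℝ) → ℝ)
    (hf0 : f (fun _ => 0) = 0)
    (hlayer : ∀ σ : Equiv.Perm (Fin n), ∀ x : Fin n → ℝ, (∀ i, x i ∈ I) →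
      Monotone (x ∘ σ) → 0 ≤ xsl hn σ x 0 →
      f x = ∑ i ∈ Finset.range n, dl hn σ x i * f (indTuple (SUp σ i) 1))
    (hshift : ∀ σ : Equiv.Perm (Fin n), ∀ x : Fin n → ℝ, (∀ i, x i ∈ I) →
      Monotone (x ∘ σ) → xsl hn σ x 0 < 0 →
      (f x = xsl hn σ x 0 * f (indTuple (Finset.univ) 1) + f (fun j => x j - xsl hn σ x 0)
        ∧ ∀ i, x i - xsl hn σ x 0 ∈ I)) :
    IsSignedChoquetOn I f := by
  refine ⟨fun S => f (indTuple S 1), ?_, ?_⟩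
  · show f (indTuple ∅ 1) = 0
    rw [indTuple_emptyset]; exact hf0
  intro σ x hx hmono
  have hempty : f (indTuple (SUp σ n) 1) = 0 := by
    rw [SUp_of_le σ le_rfl, indTuple_emptyset]; exact hf0
  have habel := abel_sum (xsl hn σ x) (fun i => f (indTuple (SUp σ i) 1)) n hempty
  have htarget : (∑ i : Fin n, x (σ i) *
        (f (indTuple (SUp σ (i:ℕ)) 1) - f (indTuple (SUp σ ((i:ℕ)+1)) 1)))
      = ∑ i ∈ Finset.range n, xsl hn σ x i *
          (f (indTuple (SUp σ i) 1) - f (indTuple (SUp σ (i+1)) 1)) := by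
    rw [← Fin.sum_univ_eq_sum_range (fun i => xsl hn σ x i *
      (f (indTuple (SUp σ i) 1) - f (indTuple (SUp σ (i+1)) 1))) n]
    exact Finset.sum_congr rfl (fun i _ => by rw [xsl_eq])
  show f x = ∑ i : Fin n, x (σ i) *
    (f (indTuple (SUp σ (i:ℕ)) 1) - f (indTuple (SUp σ ((i:ℕ)+1)) 1))
  rw [htarget, ← habel]
  have hgoal : ∑ i ∈ Finset.range n,
      (xsl hn σ x i - if i = 0 then 0 else xsl hn σ x (i-1)) * f (indTuple (SUp σ i) 1)
      = ∑ i ∈ Finset.range n, dl hn σ x i * f (indTuple (SUp σ i) 1) := rfl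
  rw [hgoal]
  by_cases hm : 0 ≤ xsl hn σ x 0
  · exact hlayer σ x hx hmono hm
  · push_neg at hm
    obtain ⟨heq, hmem⟩ := hshift σ x hx hmono hm
    have hzxs : ∀ k, xsl hn σ (fun j => x j - xsl hn σ x 0) k
        = xsl hn σ x k - xsl hn σ x 0 := fun k => rfl
    have hzm : Monotone ((fun j => x j - xsl hn σ x 0) ∘ σ) := fun u u' hu => by
      simp only [Function.comp_apply]
      exact sub_le_sub_right (hmono hu) _
    have hlz := hlayer σ (fun j => x j - xsl hn σ x 0) hmem hzm (by rw [hzxs]; simp)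
    rw [heq, hlz]
    have hsplit : ∀ i ∈ Finset.range n,
        dl hn σ (fun j => x j - xsl hn σ x 0) i * f (indTuple (SUp σ i) 1)
          = dl hn σ x i * f (indTuple (SUp σ i) 1)
            - (if i = 0 then xsl hn σ x 0 * f (indTuple (SUp σ i) 1) else 0) := by
      intro i _
      have dl_zero : ∀ y : Fin n → ℝ, dl hn σ y 0 = xsl hn σ y 0 := fun y => by simp [dl]
      have dl_succ : ∀ (y : Fin n → ℝ) (k : ℕ),
          dl hn σ y (k+1) = xsl hn σ y (k+1) - xsl hn σ y k := fun y k => by simp [dl]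
      cases i with
      | zero =>
        rw [if_pos (rfl : (0:ℕ) = 0), dl_zero, dl_zero, hzxs]
        ring
      | succ k =>
        rw [if_neg (Nat.succ_ne_zero k), dl_succ, dl_succ, hzxs, hzxs]
        ring
    rw [Finset.sum_congr rfl hsplit, Finset.sum_sub_distrib]
    rw [Finset.sum_ite_eq' (Finset.range n) 0
      (fun i => xsl hn σ x 0 * f (indTuple (SUp σ i) 1))]
    rw [if_pos (Finset.mem_range.mpr hn), SUp_zero]
    ring

lemma hom'_of_hom (I : Set ℝ) (h0 : (0:ℝ) ∈ I) (h1 : (1:ℝ) ∈ I)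
    (f : (Fin n → ℝ) → ℝ)
    (hom : ∀ x ∈ I, ∀ c : ℝ, 0 < c → c * x ∈ I → ∀ S : Finset (Fin n),
      f (indTuple S (c * x)) = c * f (indTuple S x)) :
    f (fun _ => 0) = 0 ∧
      ∀ S : Finset (Fin n), ∀ r ∈ I, 0 ≤ r → f (indTuple S r) = r * f (indTuple S 1) := by
  have hf0 : f (fun _ => 0) = 0 := by
    have h := hom 0 h0 2 (by norm_num) (by rwa [mul_zero]) ∅
    rw [indTuple_emptyset, indTuple_emptyset] at h
    linarith
  refine ⟨hf0, fun S r hr hrnn => ?_⟩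
  rcases eq_or_lt_of_le hrnn with h | h
  · rw [← h, indTuple_zero, hf0]; ring
  · have hh := hom 1 h1 r h (by rwa [mul_one]) S
    rwa [mul_one] at hh

lemma choquet_of_comon (hn : 0 < n) (I : Set ℝ) (hI : I.OrdConnected)
    (h0 : (0:ℝ) ∈ I) (hcase : I ⊆ Set.Ici 0 ∨ I = Set.univ)
    (f : (Fin n → ℝ) → ℝ) (hadd : ComonAdditiveOn I f)
    (hf0 : f (fun _ => 0) = 0)
    (hom' : ∀ S : Finset (Fin n), ∀ r ∈ I, 0 ≤ r → f (indTuple S r) = r * f (indTuple S 1)) :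
    IsSignedChoquetOn I f := by
  refine backward_main hn I f hf0 (fun σ x hx hmono hpos =>
    layer_comon_total hn I hI h0 f hadd hom' σ x hx hmono hpos) ?_
  intro σ x hx hmono hneg
  rcases hcase with hsub | rfl
  · have : (0:ℝ) ≤ xsl hn σ x 0 := hsub (xsl_mem hn σ x hx 0)
    linarith
  · refine ⟨?_, fun i => Set.mem_univ _⟩
    have htriv : ∀ y : Fin n → ℝ, ∀ i, y i ∈ (Set.univ : Set ℝ) := fun y i => Set.mem_univ _
    have hconst : f (fun _ : Fin n => xsl hn σ x 0)
        = xsl hn σ x 0 * f (indTuple Finset.univ 1) := by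
      have hcc := hadd (fun _ => xsl hn σ x 0) (fun _ => -(xsl hn σ x 0)) (htriv _) (htriv _)
        ⟨σ, monotone_const, monotone_const⟩ (htriv _)
      have e0 : (fun i : Fin n => xsl hn σ x 0 + -(xsl hn σ x 0)) = fun _ : Fin n => (0:ℝ) :=
        funext fun i => by ring
      rw [e0, hf0] at hcc
      have hneg' : f (fun _ : Fin n => -(xsl hn σ x 0))
          = (-(xsl hn σ x 0)) * f (indTuple Finset.univ 1) := by
        have := hom' Finset.univ (-(xsl hn σ x 0)) (Set.mem_univ _) (by linarith)
        rw [indTuple_univ] at this; exact this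
      rw [hneg'] at hcc
      linarith
    have hzm : Monotone ((fun j => x j - xsl hn σ x 0) ∘ σ) := fun u u' hu => by
      simp only [Function.comp_apply]
      exact sub_le_sub_right (hmono hu) _
    have hmain := hadd (fun _ => xsl hn σ x 0) (fun j => x j - xsl hn σ x 0)
      (htriv _) (htriv _) ⟨σ, monotone_const, hzm⟩ (htriv _)
    have ex : (fun i : Fin n => xsl hn σ x 0 + (x i - xsl hn σ x 0)) = x :=
      funext fun i => by ring
    rw [ex] at hmain
    rw [hmain, hconst]

lemma choquet_of_hmin (hn : 0 < n) (I : Set ℝ) (hI : I.OrdConnected)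
    (h0 : (0:ℝ) ∈ I) (hcase : I ⊆ Set.Ici 0 ∨ I = Set.univ)
    (f : (Fin n → ℝ) → ℝ) (hmin : HorizMinAdditiveOn I f)
    (hf0 : f (fun _ => 0) = 0)
    (hom' : ∀ S : Finset (Fin n), ∀ r ∈ I, 0 ≤ r → f (indTuple S r) = r * f (indTuple S 1)) :
    IsSignedChoquetOn I f := by
  refine backward_main hn I f hf0 (fun σ x hx hmono hpos =>
    layer_hmin_total hn I hI h0 f hf0 hmin hom' σ x hx hmono hpos) ?_
  intro σ x hx hmono hneg
  rcases hcase with hsub | rfl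
  · have : (0:ℝ) ≤ xsl hn σ x 0 := hsub (xsl_mem hn σ x hx 0)
    linarith
  · refine ⟨?_, fun i => Set.mem_univ _⟩
    have hconst : f (fun _ : Fin n => xsl hn σ x 0)
        = xsl hn σ x 0 * f (indTuple Finset.univ 1) := by
      have h := hmin (fun _ : Fin n => (0:ℝ)) (fun i => Set.mem_univ _) (xsl hn σ x 0)
        (Set.mem_univ _) (fun i => Set.mem_univ _)
      have e1 : (fun i : Fin n => min (0:ℝ) (xsl hn σ x 0)) = fun _ : Fin n => xsl hn σ x 0 :=
        funext fun i => min_eq_right (le_of_lt hneg)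
      have e2 : (fun i : Fin n => (0:ℝ) - min (0:ℝ) (xsl hn σ x 0))
          = fun _ : Fin n => -(xsl hn σ x 0) :=
        funext fun i => by rw [min_eq_right (le_of_lt hneg)]; ring
      rw [e1, e2, hf0] at h
      have hneg' : f (fun _ : Fin n => -(xsl hn σ x 0))
          = (-(xsl hn σ x 0)) * f (indTuple Finset.univ 1) := by
        have := hom' Finset.univ (-(xsl hn σ x 0)) (Set.mem_univ _) (by linarith)
        rw [indTuple_univ] at this; exact this
      rw [hneg'] at h
      linarith
    have hle : ∀ j, xsl hn σ x 0 ≤ x j := fun j => by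
      rw [xsl_symm hn σ x j]
      exact (xsl_mono hn σ x hmono) (Nat.zero_le _)
    have h := hmin x hx (xsl hn σ x 0) (Set.mem_univ _) (fun i => Set.mem_univ _)
    have e1 : (fun i => min (x i) (xsl hn σ x 0)) = fun _ : Fin n => xsl hn σ x 0 :=
      funext fun i => min_eq_right (hle i)
    have e2 : (fun i => x i - min (x i) (xsl hn σ x 0)) = fun j => x j - xsl hn σ x 0 :=
      funext fun i => by rw [min_eq_right (hle i)]
    rw [e1, e2] at h
    rw [h, hconst]

end MainAux


section NegAux
variable {n : ℕ}

lemma SUp_rev_eq (σ : Equiv.Perm (Fin n)) {k : ℕ} (hk : k ≤ n) :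
    SUp (Fin.revPerm.trans σ) k = (SUp σ (n - k))ᶜ := by
  ext j
  simp only [mem_SUp, Finset.mem_compl]
  have h1 : ((Fin.revPerm.trans σ).symm j : ℕ) = n - (((σ.symm j : Fin n) : ℕ) + 1) := by
    rw [Equiv.symm_trans_apply]
    simp [Fin.val_rev]
  rw [h1]
  have := (σ.symm j).isLt
  omega

lemma choquet_neg (hn : 0 < n) (f : (Fin n → ℝ) → ℝ)
    (h : IsSignedChoquetOn Set.univ (fun y => -f (fun i => -y i))) :
    IsSignedChoquetOn Set.univ f := by
  obtain ⟨v, hv0, hrep⟩ := h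
  refine ⟨fun S => v Finset.univ - v Sᶜ, ?_, ?_⟩
  · show v Finset.univ - v ∅ᶜ = 0
    rw [Finset.compl_empty]; ring
  · intro σ x hx hmono
    have hmono' : Monotone ((fun i => -x i) ∘ (Fin.revPerm.trans σ)) := by
      intro a b hab
      simp only [Function.comp_apply, Equiv.trans_apply, Fin.revPerm_apply]
      simp only [neg_le_neg_iff]
      exact hmono (Fin.rev_le_rev.mpr hab)
    have hg := hrep (Fin.revPerm.trans σ) (fun i => -x i) (fun i => Set.mem_univ _) hmono'
    have hgl : (fun y => -f (fun i => -y i)) (fun i => -x i) = -f x := by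
      show -f (fun i => - - x i) = -f x
      rw [show (fun i : Fin n => - - x i) = x from funext fun i => neg_neg (x i)]
    rw [hgl] at hg
    have hfx : f x = ∑ i : Fin n, x ((Fin.revPerm.trans σ) i) *
        (v (SUp (Fin.revPerm.trans σ) (i:ℕ)) - v (SUp (Fin.revPerm.trans σ) ((i:ℕ)+1))) := by
      have h2 := congrArg Neg.neg hg
      rw [neg_neg] at h2
      rw [h2, ← Finset.sum_neg_distrib]
      refine Finset.sum_congr rfl (fun i _ => ?_)
      beta_reduce
      ring
    have htred : (∑ i : Fin n, x (σ i) *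
        ((fun S => v Finset.univ - v Sᶜ) (SUp σ (i:ℕ))
          - (fun S => v Finset.univ - v Sᶜ) (SUp σ ((i:ℕ)+1))))
        = ∑ i : Fin n, x (σ i) * ((v Finset.univ - v (SUp σ (i:ℕ))ᶜ)
            - (v Finset.univ - v (SUp σ ((i:ℕ)+1))ᶜ)) := rfl
    rw [hfx, htred]
    refine Fintype.sum_equiv Fin.revPerm _ _ (fun i => ?_)
    beta_reduce
    simp only [Fin.revPerm_apply]
    have hτi : (Fin.revPerm.trans σ) i = σ (Fin.rev i) := rfl
    have e1 : SUp (Fin.revPerm.trans σ) ((i:ℕ)+1) = (SUp σ ((Fin.rev i : Fin n) : ℕ))ᶜ := by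
      rw [Fin.val_rev]
      exact SUp_rev_eq σ (by have := i.isLt; omega)
    have e2 : SUp (Fin.revPerm.trans σ) (i:ℕ) = (SUp σ (((Fin.rev i : Fin n) : ℕ)+1))ᶜ := by
      rw [show ((Fin.rev i : Fin n) : ℕ) + 1 = n - (i:ℕ) from by
        rw [Fin.val_rev]; have := i.isLt; omega]
      exact SUp_rev_eq σ (le_of_lt i.isLt)
    rw [hτi, e1, e2]
    ring

lemma hmin_of_hmax (f : (Fin n → ℝ) → ℝ) (hmax : HorizMaxAdditiveOn Set.univ f) :
    HorizMinAdditiveOn Set.univ (fun y => -f (fun i => -y i)) := by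
  intro x hx c hc hres
  have h := hmax (fun i => -x i) (fun i => Set.mem_univ _) (-c) (Set.mem_univ _)
    (fun i => Set.mem_univ _)
  have h' : f (fun i => -x i) = f (fun i => max (-x i) (-c))
      + f (fun i => (-x i) - max (-x i) (-c)) := h
  have ea : (fun i : Fin n => -(min (x i) c)) = fun i => max (-x i) (-c) :=
    funext fun i => by rw [max_neg_neg]
  have eb : (fun i : Fin n => -(x i - min (x i) c)) = fun i => (-x i) - max (-x i) (-c) :=
    funext fun i => by rw [max_neg_neg]; ring
  show -f (fun i => -x i) = -f (fun i => -(min (x i) c)) + -f (fun i => -(x i - min (x i) c))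
  rw [ea, eb, h']
  ring

lemma hom_neg (f : (Fin n → ℝ) → ℝ)
    (hom : ∀ x ∈ (Set.univ : Set ℝ), ∀ c : ℝ, 0 < c → c * x ∈ (Set.univ : Set ℝ) →
      ∀ S : Finset (Fin n), f (indTuple S (c * x)) = c * f (indTuple S x)) :
    ∀ x ∈ (Set.univ : Set ℝ), ∀ c : ℝ, 0 < c → c * x ∈ (Set.univ : Set ℝ) →
      ∀ S : Finset (Fin n), (fun y => -f (fun i => -y i)) (indTuple S (c * x))
        = c * (fun y => -f (fun i => -y i)) (indTuple S x) := by
  intro x _ c hc _ S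
  show -f (fun i => -(indTuple S (c*x) i)) = c * -f (fun i => -(indTuple S x i))
  have e : ∀ r : ℝ, (fun i : Fin n => -(indTuple S r i)) = indTuple S (-r) := fun r => by
    funext i
    unfold indTuple
    split
    · rfl
    · exact neg_zero
  rw [e, e]
  have h := hom (-x) (Set.mem_univ _) c hc (Set.mem_univ _) S
  rw [show c * -x = -(c*x) by ring] at h
  rw [h]
  ring

lemma choquet_of_hmax (hn : 0 < n) (f : (Fin n → ℝ) → ℝ)
    (hmax : HorizMaxAdditiveOn Set.univ f)
    (hom : ∀ x ∈ (Set.univ : Set ℝ), ∀ c : ℝ, 0 < c → c * x ∈ (Set.univ : Set ℝ) →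
      ∀ S : Finset (Fin n), f (indTuple S (c * x)) = c * f (indTuple S x)) :
    IsSignedChoquetOn Set.univ f := by
  apply choquet_neg hn
  obtain ⟨hg0, homg⟩ := hom'_of_hom Set.univ (Set.mem_univ _) (Set.mem_univ _)
    (fun y => -f (fun i => -y i)) (hom_neg f hom)
  exact choquet_of_hmin hn Set.univ Set.ordConnected_univ (Set.mem_univ _) (Or.inr rfl)
    _ (hmin_of_hmax f hmax) hg0 homg

lemma forward_comon (I : Set ℝ) (f : (Fin n → ℝ) → ℝ)
    (hrep : IsSignedChoquetOn I f) : ComonAdditiveOn I f := by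
  obtain ⟨v, hv0, hrep⟩ := hrep
  intro x y hx hy hcom hsum
  obtain ⟨σ, hxm, hym⟩ := hcom
  have hsm : Monotone ((fun i => x i + y i) ∘ σ) := fun u u' hu =>
    add_le_add (hxm hu) (hym hu)
  rw [hrep σ x hx hxm, hrep σ y hy hym, hrep σ (fun i => x i + y i) hsum hsm,
    ← Finset.sum_add_distrib]
  exact Finset.sum_congr rfl (fun i _ => by show (x (σ i) + y (σ i)) * _ = _; ring)

lemma forward_hom (I : Set ℝ) (h0 : (0:ℝ) ∈ I) (f : (Fin n → ℝ) → ℝ)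
    (hrep : IsSignedChoquetOn I f) :
    ∀ x ∈ I, ∀ c : ℝ, 0 < c → c * x ∈ I → ∀ S : Finset (Fin n),
      f (indTuple S (c * x)) = c * f (indTuple S x) := by
  obtain ⟨v, hv0, hrep⟩ := hrep
  intro x hx c hc hcx S
  set σ := Tuple.sort (indTuple S x) with hσ
  have hmono : Monotone (indTuple S x ∘ σ) := Tuple.monotone_sort (indTuple S x)
  have hmem : ∀ i, indTuple S x i ∈ I := fun i => by
    unfold indTuple; split
    · exact hx
    · exact h0
  have hscale : ∀ j, indTuple S (c * x) j = c * indTuple S x j := fun j => by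
    unfold indTuple; split
    · rfl
    · ring
  have hmono' : Monotone (indTuple S (c*x) ∘ σ) := fun u u' hu => by
    simp only [Function.comp_apply, hscale]
    exact mul_le_mul_of_nonneg_left (hmono hu) (le_of_lt hc)
  have hmem' : ∀ i, indTuple S (c*x) i ∈ I := fun i => by
    unfold indTuple; split
    · exact hcx
    · exact h0
  rw [hrep σ _ hmem' hmono', hrep σ _ hmem hmono, Finset.mul_sum]
  exact Finset.sum_congr rfl (fun i _ => by rw [hscale]; ring)

end NegAux


theorem statement1 (n : ℕ) (hn : 0 < n) (I : Set ℝ) (hI : I.OrdConnected)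
    (hcase : (Set.Icc (0 : ℝ) 1 ⊆ I ∧ I ⊆ Set.Ici 0) ∨ I = Set.univ)
    (f : (Fin n → ℝ) → ℝ) :
    IsSignedChoquetOn I f ↔
      ((ComonAdditiveOn I f ∨ HorizMinAdditiveOn I f ∨
          (I = Set.univ ∧ HorizMaxAdditiveOn I f)) ∧
        ∀ x ∈ I, ∀ c : ℝ, 0 < c → c * x ∈ I → ∀ S : Finset (Fin n),
          f (indTuple S (c * x)) = c * f (indTuple S x)) := by
  have h0 : (0:ℝ) ∈ I := by
    rcases hcase with ⟨hsub, _⟩ | rfl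
    · exact hsub ⟨le_rfl, zero_le_one⟩
    · exact Set.mem_univ _
  have h1 : (1:ℝ) ∈ I := by
    rcases hcase with ⟨hsub, _⟩ | rfl
    · exact hsub ⟨zero_le_one, le_rfl⟩
    · exact Set.mem_univ _
  constructor
  · intro hc
    exact ⟨Or.inl (forward_comon I f hc),
      fun x hx c hc' hcx S => forward_hom I h0 f hc x hx c hc' hcx S⟩
  · rintro ⟨haddcase, hom⟩
    obtain ⟨hf0, hom'⟩ := hom'_of_hom I h0 h1 f hom
    have hcase' : I ⊆ Set.Ici 0 ∨ I = Set.univ := by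
      rcases hcase with ⟨_, hsub⟩ | rfl
      · exact Or.inl hsub
      · exact Or.inr rfl
    rcases haddcase with hadd | hmin | ⟨hIuniv, hmax⟩
    · exact choquet_of_comon hn I hI h0 hcase' f hadd hf0 hom'
    · exact choquet_of_hmin hn I hI h0 hcase' f hmin hf0 hom'
    · subst hIuniv
      exact choquet_of_hmax hn f hmax hom
end

section
/- Assume I is a real interval centered at 0. A function f : Iⁿ → ℝ is horizontally median-additive if and only if its restrictions to I₊ⁿ and to I₋ⁿ are comonotonically additive and f(x) = f(x⁺) + f(−x⁻) for every x ∈ Iⁿ. -/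
section CmHelpers

lemma cm_mem_of_between {I : Set ℝ} (hI : I.OrdConnected) {a b t : ℝ} (ha : a ∈ I) (hb : b ∈ I)
    (h1 : a ≤ t) (h2 : t ≤ b) : t ∈ I := hI.out ha hb ⟨h1, h2⟩

lemma cm_sub_min_eq (a t : ℝ) : t - min t a = max (t - a) 0 := by
  rcases le_total t a with h | h
  · rw [min_eq_left h, max_eq_right (by linarith), sub_self]
  · rw [min_eq_right h, max_eq_left (by linarith)]

lemma cm_mono_cut (a : ℝ) : Monotone (fun t : ℝ => t - min t a) := by
  have h : (fun t : ℝ => t - min t a) = fun t => max (t - a) 0 := funext fun t => cm_sub_min_eq a t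
  rw [h]
  exact Monotone.max (fun s t hst => by simpa using sub_le_sub_right hst a) monotone_const

lemma cm_sub_max_eq (a t : ℝ) : t - max t a = min (t - a) 0 := by
  rcases le_total t a with h | h
  · rw [max_eq_right h, min_eq_left (by linarith)]
  · rw [max_eq_left h, min_eq_right (by linarith), sub_self]

lemma cm_mono_cut' (a : ℝ) : Monotone (fun t : ℝ => t - max t a) := by
  have h : (fun t : ℝ => t - max t a) = fun t => min (t - a) 0 := funext fun t => cm_sub_max_eq a t
  rw [h]
  exact Monotone.min (fun s t hst => by simpa using sub_le_sub_right hst a) monotone_const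

lemma cm_f0 {n : ℕ} {I : Set ℝ} (h0I : (0:ℝ) ∈ I) {f : (Fin n → ℝ) → ℝ}
    (hf : HorizMedAdditiveOn I f) : f (fun _ => 0) = 0 := by
  have h := hf (fun _ => 0) (fun _ => h0I) 0 h0I le_rfl
  simp only [neg_zero, min_self, max_self, sub_zero, sub_self] at h
  linarith

lemma cm_comon_neg {n : ℕ} {x y : Fin n → ℝ} (h : Comonotone x y) :
    Comonotone (fun i => -x i) (fun i => -y i) := by
  obtain ⟨σ, h1, h2⟩ := h
  refine ⟨Fin.revPerm.trans σ, ?_, ?_⟩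
  · intro i j hij
    simpa using neg_le_neg (h1 (Fin.rev_le_rev.mpr hij))
  · intro i j hij
    simpa using neg_le_neg (h2 (Fin.rev_le_rev.mpr hij))

lemma cm_neg_hma {n : ℕ} {I : Set ℝ} (hsymm : ∀ x : ℝ, x ∈ I → -x ∈ I)
    {f : (Fin n → ℝ) → ℝ} (hf : HorizMedAdditiveOn I f) :
    HorizMedAdditiveOn I (fun x => f (fun i => -x i)) := by
  intro x hx c hc hc0
  have h := hf (fun i => -x i) (fun i => hsymm _ (hx i)) c hc hc0
  have e1 : (fun i => max (-c) (min (-x i) c)) = fun i => -(max (-c) (min (x i) c)) := by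
    funext i
    rcases le_total (x i) (-c) with h1 | h1 <;> rcases le_total (x i) c with h2 | h2 <;>
      rw [min_def, min_def, max_def, max_def] <;> split_ifs <;> linarith
  have e2 : (fun i => -x i - min (-x i) c) = fun i => -(x i - max (x i) (-c)) := by
    funext i
    rcases le_total (-x i) c with h1 | h1
    · rw [min_eq_left h1, max_eq_left (by linarith)]; ring
    · rw [min_eq_right h1, max_eq_right (by linarith)]; ring
  have e3 : (fun i => -x i - max (-x i) (-c)) = fun i => -(x i - min (x i) c) := by
    funext i
    rcases le_total (x i) c with h1 | h1
    · rw [min_eq_left h1, max_eq_left (by linarith)]; ring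
    · rw [min_eq_right h1, max_eq_right (by linarith)]; ring
  rw [e1, e2, e3] at h
  simp only
  rw [h]; ring


lemma cm_negmax (m : ℝ) : -max (-m) 0 = min m 0 := by
  rcases le_total m 0 with h | h
  · rw [max_eq_left (neg_nonneg.mpr h), neg_neg, min_eq_left h]
  · rw [max_eq_right (neg_nonpos.mpr h), neg_zero, min_eq_right h]

lemma cm_medpos {c : ℝ} (hc0 : 0 ≤ c) (t : ℝ) :
    max (max (-c) (min t c)) 0 = min (max t 0) c := by
  rcases le_total t 0 with h1 | h1
  · rw [min_eq_left (h1.trans hc0), max_eq_right (max_le (neg_nonpos.mpr hc0) h1),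
      max_eq_right h1, min_eq_left hc0]
  · rw [max_eq_left h1]
    rcases le_total t c with h2 | h2
    · rw [min_eq_left h2, max_eq_right (by linarith : -c ≤ t), max_eq_left (by linarith)]
    · rw [min_eq_right h2, max_eq_right (by linarith : -c ≤ c), max_eq_left (by linarith)]

lemma cm_medneg {c : ℝ} (hc0 : 0 ≤ c) (t : ℝ) :
    min (max (-c) (min t c)) 0 = max (min t 0) (-c) := by
  rcases le_total t 0 with h1 | h1
  · rw [min_eq_left (h1.trans hc0), min_eq_left (max_le (neg_nonpos.mpr hc0) h1),
      min_eq_left h1, max_comm]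
  · rw [min_eq_right h1, max_eq_left (neg_nonpos.mpr hc0),
      min_eq_right (le_max_of_le_right (le_min h1 hc0))]

lemma cm_vA {c : ℝ} (hc0 : 0 ≤ c) (t : ℝ) :
    t - min t c = max t 0 - min (max t 0) c := by
  rcases le_total t 0 with h1 | h1
  · rw [min_eq_left (h1.trans hc0), max_eq_right h1, min_eq_left hc0]
    ring
  · rw [max_eq_left h1]

lemma cm_vB {c : ℝ} (hc0 : 0 ≤ c) (t : ℝ) :
    t - max t (-c) = min t 0 - max (min t 0) (-c) := by
  rcases le_total t 0 with h1 | h1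
  · rw [min_eq_left h1]
  · rw [min_eq_right h1, max_eq_left (by linarith : -c ≤ t), max_eq_left (neg_nonpos.mpr hc0)]
    ring

lemma cm_pos_side {n : ℕ} {I : Set ℝ} (hI : I.OrdConnected) (h0I : (0:ℝ) ∈ I)
    {f : (Fin n → ℝ) → ℝ} (hf : HorizMedAdditiveOn I f) :
    ComonAdditiveOn (I ∩ Set.Ici 0) f := by
  have f0 : f (fun _ => 0) = 0 := cm_f0 h0I hf
  have hminA : ∀ x : Fin n → ℝ, (∀ i, x i ∈ I) → (∀ i, 0 ≤ x i) → ∀ c, c ∈ I → 0 ≤ c →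
      f x = f (fun i => min (x i) c) + f (fun i => x i - min (x i) c) := by
    intro x hx hx0 c hc hc0
    have h := hf x hx c hc hc0
    have e1 : (fun i => max (-c) (min (x i) c)) = fun i => min (x i) c := by
      funext i
      exact max_eq_right ((neg_nonpos.mpr hc0).trans (le_min (hx0 i) hc0))
    have e2 : (fun i => x i - max (x i) (-c)) = fun _ => (0:ℝ) := by
      funext i
      rw [max_eq_left ((neg_nonpos.mpr hc0).trans (hx0 i)), sub_self]
    rw [e1, e2, f0] at h
    linarith
  have key : ∀ N : ℕ, ∀ x y : Fin n → ℝ, (∀ i, x i ∈ I) → (∀ i, 0 ≤ x i) →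
      (∀ i, y i ∈ I) → (∀ i, 0 ≤ y i) → (∀ i, x i + y i ∈ I) →
      ∀ σ : Equiv.Perm (Fin n), Monotone (x ∘ σ) → Monotone (y ∘ σ) →
      (Finset.univ.filter (fun i => x i + y i ≠ 0)).card ≤ N →
      f (fun i => x i + y i) = f x + f y := by
    intro N
    induction N with
    | zero =>
      intro x y hxI hx0 hyI hy0 hzI σ hxm hym hcard
      have hall : ∀ i, x i + y i = 0 := by
        intro i
        by_contra hne
        have hmem : i ∈ Finset.univ.filter (fun i => x i + y i ≠ 0) := by
          simp [hne]
        have := Finset.card_pos.mpr ⟨i, hmem⟩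
        omega
      have hx' : x = fun _ => 0 := funext fun i => le_antisymm (by linarith [hall i, hy0 i]) (hx0 i)
      have hy' : y = fun _ => 0 := funext fun i => le_antisymm (by linarith [hall i, hx0 i]) (hy0 i)
      have hz' : (fun i => x i + y i) = fun _ => (0:ℝ) := funext hall
      rw [hz', hx', hy', f0]; ring
    | succ N ih =>
      intro x y hxI hx0 hyI hy0 hzI σ hxm hym hcard
      by_cases hex : ∀ i, x i + y i = 0
      · have hx' : x = fun _ => 0 := funext fun i => le_antisymm (by linarith [hex i, hy0 i]) (hx0 i)
        have hy' : y = fun _ => 0 := funext fun i => le_antisymm (by linarith [hex i, hx0 i]) (hy0 i)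
        have hz' : (fun i => x i + y i) = fun _ => (0:ℝ) := funext hex
        rw [hz', hx', hy', f0]; ring
      push_neg at hex
      obtain ⟨i₀, hi₀⟩ := hex
      set T : Finset (Fin n) := Finset.univ.filter (fun j => x (σ j) + y (σ j) ≠ 0) with hT
      have hTne : T.Nonempty := ⟨σ⁻¹ i₀, by simp [hT, hi₀]⟩
      set k := T.min' hTne with hkdef
      have hk : x (σ k) + y (σ k) ≠ 0 := by
        have h := Finset.min'_mem T hTne
        rw [← hkdef] at h
        rw [hT] at h
        exact (Finset.mem_filter.mp h).2
      set a := x (σ k) with hadef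
      set b := y (σ k) with hbdef
      have ha0 : 0 ≤ a := hx0 _
      have hb0 : 0 ≤ b := hy0 _
      have hc0 : 0 ≤ a + b := by linarith
      have haI : a ∈ I := hxI _
      have hbI : b ∈ I := hyI _
      have hcI : a + b ∈ I := hzI _
      have P2 : ∀ i, x i + y i ≠ 0 → a ≤ x i ∧ b ≤ y i := by
        intro i hi
        have hj : σ⁻¹ i ∈ T := by simp [hT, hi]
        have hkj : k ≤ σ⁻¹ i := T.min'_le _ hj
        constructor
        · have := hxm hkj
          simpa using this
        · have := hym hkj
          simpa using this
      have P1 : ∀ i, x i + y i = 0 → x i = 0 ∧ y i = 0 := fun i hi =>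
        ⟨le_antisymm (by linarith [hy0 i]) (hx0 i), le_antisymm (by linarith [hx0 i]) (hy0 i)⟩
      have hz0 : ∀ i, 0 ≤ x i + y i := fun i => by linarith [hx0 i, hy0 i]
      have E1 := hminA (fun i => x i + y i) hzI hz0 (a + b) hcI hc0
      have E2 := hminA x hxI hx0 a haI ha0
      have E3 := hminA y hyI hy0 b hbI hb0
      have hwI : ∀ i, min (x i + y i) (a + b) ∈ I :=
        fun i => cm_mem_of_between hI h0I hcI (le_min (hz0 i) hc0) (min_le_right _ _)
      have hw0 : ∀ i, 0 ≤ min (x i + y i) (a + b) := fun i => le_min (hz0 i) hc0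
      have E4 := hminA (fun i => min (x i + y i) (a + b)) hwI hw0 a haI ha0
      have e4a : (fun i => min (min (x i + y i) (a + b)) a) = fun i => min (x i) a := by
        funext i
        by_cases hi : x i + y i = 0
        · obtain ⟨h1, h2⟩ := P1 i hi
          rw [h1, h2]
          simp [min_eq_left, hc0, ha0]
        · obtain ⟨h1, h2⟩ := P2 i hi
          rw [min_eq_right (by linarith : a + b ≤ x i + y i),
            min_eq_right (by linarith : a ≤ a + b), min_eq_right h1]
      have e4b : (fun i => min (x i + y i) (a + b) - min (min (x i + y i) (a + b)) a)
          = fun i => min (y i) b := by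
        funext i
        by_cases hi : x i + y i = 0
        · obtain ⟨h1, h2⟩ := P1 i hi
          rw [hi, h2]
          simp [min_eq_left, hc0, ha0, hb0]
        · obtain ⟨h1, h2⟩ := P2 i hi
          rw [min_eq_right (by linarith : a + b ≤ x i + y i),
            min_eq_right (by linarith : a ≤ a + b), min_eq_right h2]
          ring
      rw [e4a, e4b] at E4
      set x' : Fin n → ℝ := fun i => x i - min (x i) a with hx'def
      set y' : Fin n → ℝ := fun i => y i - min (y i) b with hy'def
      have hx'I : ∀ i, x' i ∈ I := fun i =>
        cm_mem_of_between hI h0I (hxI i) (sub_nonneg.mpr (min_le_left _ _))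
          (sub_le_self _ (le_min (hx0 i) ha0))
      have hy'I : ∀ i, y' i ∈ I := fun i =>
        cm_mem_of_between hI h0I (hyI i) (sub_nonneg.mpr (min_le_left _ _))
          (sub_le_self _ (le_min (hy0 i) hb0))
      have hx'0 : ∀ i, 0 ≤ x' i := fun i => sub_nonneg.mpr (min_le_left _ _)
      have hy'0 : ∀ i, 0 ≤ y' i := fun i => sub_nonneg.mpr (min_le_left _ _)
      have hsum' : (fun i => x' i + y' i) = fun i => x i + y i - min (x i + y i) (a + b) := by
        funext i
        simp only [hx'def, hy'def]
        by_cases hi : x i + y i = 0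
        · obtain ⟨h1, h2⟩ := P1 i hi
          rw [h1, h2]
          simp [min_eq_left, ha0, hb0, hc0]
        · obtain ⟨h1, h2⟩ := P2 i hi
          rw [min_eq_right h1, min_eq_right h2,
            min_eq_right (by linarith : a + b ≤ x i + y i)]
          ring
      have hz'I : ∀ i, x i + y i - min (x i + y i) (a + b) ∈ I := fun i =>
        cm_mem_of_between hI h0I (hzI i) (sub_nonneg.mpr (min_le_left _ _)) (sub_le_self _ (hw0 i))
      have hx'm : Monotone (x' ∘ σ) := by
        have hxe : x' ∘ σ = (fun t => t - min t a) ∘ (x ∘ σ) := rfl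
        rw [hxe]; exact (cm_mono_cut a).comp hxm
      have hy'm : Monotone (y' ∘ σ) := by
        have hye : y' ∘ σ = (fun t => t - min t b) ∘ (y ∘ σ) := rfl
        rw [hye]; exact (cm_mono_cut b).comp hym
      have hsub : (Finset.univ.filter (fun i => x' i + y' i ≠ 0)) ⊆
          (Finset.univ.filter (fun i => x i + y i ≠ 0)).erase (σ k) := by
        intro i hi
        simp only [Finset.mem_filter, Finset.mem_univ, true_and] at hi
        rw [Finset.mem_erase]
        constructor
        · intro heq
          apply hi
          rw [heq]
          show x' (σ k) + y' (σ k) = 0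
          simp [hx'def, hy'def, min_self]
          rw [← hadef, ← hbdef, min_self, min_self]; ring
        · simp only [Finset.mem_filter, Finset.mem_univ, true_and]
          intro hzi
          obtain ⟨h1, h2⟩ := P1 i hzi
          apply hi
          simp [hx'def, hy'def, h1, h2, min_eq_left, ha0, hb0]
      have hk_mem : σ k ∈ Finset.univ.filter (fun i => x i + y i ≠ 0) := by
        simp only [Finset.mem_filter, Finset.mem_univ, true_and]; exact hk
      have hcard' : (Finset.univ.filter (fun i => x' i + y' i ≠ 0)).card ≤ N := by
        have h1 := Finset.card_le_card hsub
        have h2 := Finset.card_erase_of_mem hk_mem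
        have h3 := Finset.card_pos.mpr ⟨σ k, hk_mem⟩
        omega
      have E5 := ih x' y' hx'I hx'0 hy'I hy'0
        (fun i => by
          rw [show x' i + y' i = x i + y i - min (x i + y i) (a + b) from congrFun hsum' i]
          exact hz'I i)
        σ hx'm hy'm hcard'
      rw [hsum'] at E5
      beta_reduce at E1 E4
      linarith [E1, E2, E3, E4, E5]
  intro x y hx hy hcom hsum
  obtain ⟨σ, h1, h2⟩ := hcom
  exact key (Finset.univ.filter (fun i => x i + y i ≠ 0)).card x y
    (fun i => (hx i).1) (fun i => (hx i).2) (fun i => (hy i).1) (fun i => (hy i).2)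
    (fun i => (hsum i).1) σ h1 h2 le_rfl

end CmHelpers

theorem statement3 (n : ℕ) (hn : 0 < n) (I : Set ℝ) (hI : I.OrdConnected)
    (hsymm : ∀ x : ℝ, x ∈ I → -x ∈ I) (h0I : (0 : ℝ) ∈ I)
    (f : (Fin n → ℝ) → ℝ) :
    HorizMedAdditiveOn I f ↔
      (ComonAdditiveOn (I ∩ Set.Ici 0) f ∧ ComonAdditiveOn (I ∩ Set.Iic 0) f ∧
        ∀ x : Fin n → ℝ, (∀ i, x i ∈ I) →
          f x = f (fun i => max (x i) 0) + f (fun i => -max (-x i) 0)) := by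
  constructor
  · intro hf
    have f0 : f (fun _ => 0) = 0 := cm_f0 h0I hf
    refine ⟨cm_pos_side hI h0I hf, ?_, ?_⟩
    · -- negative side via reflection
      have hg : HorizMedAdditiveOn I (fun x => f (fun i => -x i)) := cm_neg_hma hsymm hf
      have hgP := cm_pos_side hI h0I hg
      intro x y hx hy hcom hsum
      have h := hgP (fun i => -x i) (fun i => -y i)
        (fun i => ⟨hsymm _ (hx i).1, Set.mem_Ici.mpr (neg_nonneg.mpr (Set.mem_Iic.mp (hx i).2))⟩)
        (fun i => ⟨hsymm _ (hy i).1, Set.mem_Ici.mpr (neg_nonneg.mpr (Set.mem_Iic.mp (hy i).2))⟩)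
        (cm_comon_neg hcom)
        (fun i => by
          rw [show -x i + -y i = -(x i + y i) by ring]
          exact ⟨hsymm _ (hsum i).1, Set.mem_Ici.mpr (neg_nonneg.mpr (Set.mem_Iic.mp (hsum i).2))⟩)
      simp only [neg_neg] at h
      have e : (fun i => -(-x i + -y i)) = fun i => x i + y i := by funext i; ring
      rw [e] at h
      exact h
    · -- f x = f x⁺ + f (−x⁻)
      intro x hx
      have h := hf x hx 0 h0I le_rfl
      have e1 : (fun i => max (-(0:ℝ)) (min (x i) 0)) = fun _ => (0:ℝ) := by
        funext i
        rw [neg_zero]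
        exact max_eq_left (min_le_right _ _)
      have e2 : (fun i => x i - min (x i) 0) = fun i => max (x i) 0 := by
        funext i
        rw [cm_sub_min_eq, sub_zero]
      have e3 : (fun i => x i - max (x i) (-(0:ℝ))) = fun i => -max (-x i) 0 := by
        funext i
        rw [neg_zero]
        rcases le_total (x i) 0 with h1 | h1 <;>
          rw [max_def, max_def] <;> split_ifs <;> linarith
      rw [e1, e2, e3, f0] at h
      linarith
  · rintro ⟨hP, hN, hsplit⟩
    intro x hx c hc hc0
    have hcI' : -c ∈ I := hsymm _ hc
    set σ := Tuple.sort x with hσ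
    have hxm : Monotone (x ∘ σ) := Tuple.monotone_sort x
    have hmaxI : ∀ i, max (x i) 0 ∈ I := by
      intro i
      rcases le_total (x i) 0 with h | h
      · rw [max_eq_right h]; exact h0I
      · rw [max_eq_left h]; exact hx i
    have hminI : ∀ i, min (x i) 0 ∈ I := by
      intro i
      rcases le_total (x i) 0 with h | h
      · rw [min_eq_left h]; exact hx i
      · rw [min_eq_right h]; exact h0I
    set u : Fin n → ℝ := fun i => min (max (x i) 0) c with hu
    set v : Fin n → ℝ := fun i => max (x i) 0 - min (max (x i) 0) c with hv
    set u' : Fin n → ℝ := fun i => max (min (x i) 0) (-c) with hu'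
    set v' : Fin n → ℝ := fun i => min (x i) 0 - max (min (x i) 0) (-c) with hv'
    have hu0 : ∀ i, 0 ≤ u i := fun i => le_min (le_max_right _ _) hc0
    have hv0 : ∀ i, 0 ≤ v i := fun i => sub_nonneg.mpr (min_le_left _ _)
    have hu'0 : ∀ i, u' i ≤ 0 := fun i => max_le (min_le_right _ _) (by linarith)
    have hv'0 : ∀ i, v' i ≤ 0 := fun i => sub_nonpos.mpr (le_max_left _ _)
    have huI : ∀ i, u i ∈ I := fun i => cm_mem_of_between hI h0I hc (hu0 i) (min_le_right _ _)
    have hvI : ∀ i, v i ∈ I := fun i =>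
      cm_mem_of_between hI h0I (hmaxI i) (hv0 i) (sub_le_self _ (hu0 i))
    have hu'I : ∀ i, u' i ∈ I := fun i =>
      cm_mem_of_between hI hcI' h0I (le_max_right _ _) (hu'0 i)
    have hv'I : ∀ i, v' i ∈ I := fun i =>
      cm_mem_of_between hI (hminI i) h0I (by have hvv : v' i = min (x i) 0 - u' i := rfl; linarith [hu'0 i]) (hv'0 i)
    -- A1 : split of the positive part
    have A1 : f (fun i => max (x i) 0) = f u + f v := by
      have h := hP u v (fun i => ⟨huI i, Set.mem_Ici.mpr (hu0 i)⟩)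
        (fun i => ⟨hvI i, Set.mem_Ici.mpr (hv0 i)⟩)
        ⟨σ, by
          have : u ∘ σ = (fun t => min (max t 0) c) ∘ (x ∘ σ) := rfl
          rw [this]
          exact ((Monotone.max monotone_id monotone_const).min monotone_const).comp hxm, by
          have : v ∘ σ = ((fun s => s - min s c) ∘ fun t => max t 0) ∘ (x ∘ σ) := rfl
          rw [this]
          exact ((cm_mono_cut c).comp (Monotone.max monotone_id monotone_const)).comp hxm⟩
        (fun i => by
          rw [show u i + v i = max (x i) 0 by simp only [hu, hv]; ring]
          exact ⟨hmaxI i, Set.mem_Ici.mpr (le_max_right _ _)⟩)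
      rw [show (fun i => u i + v i) = fun i => max (x i) 0 by
        funext i; simp only [hu, hv]; ring] at h
      exact h
    -- A2 : split of the negative part
    have A2 : f (fun i => min (x i) 0) = f u' + f v' := by
      have h := hN u' v' (fun i => ⟨hu'I i, Set.mem_Iic.mpr (hu'0 i)⟩)
        (fun i => ⟨hv'I i, Set.mem_Iic.mpr (hv'0 i)⟩)
        ⟨σ, by
          have : u' ∘ σ = (fun t => max (min t 0) (-c)) ∘ (x ∘ σ) := rfl
          rw [this]
          exact ((Monotone.min monotone_id monotone_const).max monotone_const).comp hxm, by
          have : v' ∘ σ = ((fun s => s - max s (-c)) ∘ fun t => min t 0) ∘ (x ∘ σ) := rfl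
          rw [this]
          exact ((cm_mono_cut' (-c)).comp (Monotone.min monotone_id monotone_const)).comp hxm⟩
        (fun i => by
          rw [show u' i + v' i = min (x i) 0 by simp only [hu', hv']; ring]
          exact ⟨hminI i, Set.mem_Iic.mpr (min_le_right _ _)⟩)
      rw [show (fun i => u' i + v' i) = fun i => min (x i) 0 by
        funext i; simp only [hu', hv']; ring] at h
      exact h
    -- A3 : split of the median
    have hmedI : ∀ i, max (-c) (min (x i) c) ∈ I := fun i =>
      cm_mem_of_between hI hcI' hc (le_max_left _ _)
        (max_le (by linarith) (min_le_right _ _))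
    have A3 := hsplit (fun i => max (-c) (min (x i) c)) hmedI
    beta_reduce at A3
    have eA : (fun i => max (max (-c) (min (x i) c)) 0) = u := by
      funext i
      simp only [hu]
      exact cm_medpos hc0 (x i)
    have eB : (fun i => -max (-max (-c) (min (x i) c)) 0) = u' := by
      funext i
      simp only [hu']
      rw [cm_negmax]
      exact cm_medneg hc0 (x i)
    rw [eA, eB] at A3
    -- A4/A5 : identify remainders
    have A4 : (fun i => x i - min (x i) c) = v := by
      funext i
      simp only [hv]
      exact cm_vA hc0 (x i)
    have A5 : (fun i => x i - max (x i) (-c)) = v' := by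
      funext i
      simp only [hv']
      exact cm_vB hc0 (x i)
    -- base split of x
    have A0 := hsplit x hx
    have eC : (fun i => -max (-x i) 0) = fun i => min (x i) 0 := by
      funext i
      exact cm_negmax (x i)
    rw [eC] at A0
    rw [A4, A5]
    linarith [A0, A1, A2, A3]
end

section
/- A function f : Iⁿ → ℝ is comonotonically modular if and only if it is comonotonically separable, i.e., for every permutation σ of X there exist functions f^σ_i : I → ℝ (i = 1,…,n) such that f(x) = Σ_{i=1}^n f^σ_i(x_{σ(i)}) for every x ∈ Iⁿ_σ. -/
private lemma comod_sep (n : ℕ) (hn : 0 < n) (I : Set ℝ) (c : ℝ) (hc : c ∈ I)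
    (f : (Fin n → ℝ) → ℝ) (hf : ComonModularOn I f) :
    ∃ g : Fin n → ℝ → ℝ, ∀ x : Fin n → ℝ, (∀ i, x i ∈ I) → Monotone x →
      f x = ∑ i : Fin n, g i (x i) := by
  classical
  -- step tuple value
  set S : ℕ → ℝ → ℝ → ℝ :=
    fun k u v => f (fun j : Fin n => if (j : ℕ) ≤ k then u else v) with hSdef
  set P : ℝ → ℝ := fun t => f (fun _ => t) with hPdef
  set G : ℕ → ℝ → ℝ :=
    fun k u => if u ≤ c then S k u c else S k u u - S k c u + S k c c with hGdef
  set H : ℕ → ℝ → ℝ :=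
    fun k v => if v ≤ c then S k v v - S k v c else S k c v - S k c c with hHdef
  have stepMono : ∀ (k : ℕ) {u v : ℝ}, u ≤ v →
      Monotone (fun j : Fin n => if (j : ℕ) ≤ k then u else v) := by
    intro k u v huv a b hab
    have hab' : (a : ℕ) ≤ b := hab
    dsimp only
    by_cases h1 : (a : ℕ) ≤ k <;> by_cases h2 : (b : ℕ) ≤ k <;>
      simp only [if_pos, if_neg, h1, h2, if_true, if_false]
    · exact le_refl u
    · exact huv
    · omega
    · exact le_refl v
  have stepMem : ∀ (k : ℕ) {u v : ℝ}, u ∈ I → v ∈ I →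
      ∀ j : Fin n, (if (j : ℕ) ≤ k then u else v) ∈ I := by
    intro k u v hu hv j
    by_cases h : (j : ℕ) ≤ k <;> simp [h, hu, hv]
  have mod : ∀ X Y : Fin n → ℝ, (∀ i, X i ∈ I) → (∀ i, Y i ∈ I) → Monotone X → Monotone Y →
      f X + f Y = f (fun i => min (X i) (Y i)) + f (fun i => max (X i) (Y i)) := by
    intro X Y hX hY h1 h2
    exact hf X Y hX hY ⟨1, by simpa using h1, by simpa using h2⟩
  have modS : ∀ (k : ℕ) (u₁ v₁ u₂ v₂ : ℝ), u₁ ∈ I → v₁ ∈ I → u₂ ∈ I → v₂ ∈ I →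
      u₁ ≤ v₁ → u₂ ≤ v₂ →
      S k u₁ v₁ + S k u₂ v₂ = S k (min u₁ u₂) (min v₁ v₂) + S k (max u₁ u₂) (max v₁ v₂) := by
    intro k u₁ v₁ u₂ v₂ h1 h2 h3 h4 h12 h34
    have h := mod (fun j : Fin n => if (j : ℕ) ≤ k then u₁ else v₁)
      (fun j : Fin n => if (j : ℕ) ≤ k then u₂ else v₂)
      (stepMem k h1 h2) (stepMem k h3 h4) (stepMono k h12) (stepMono k h34)
    have e1 : (fun i : Fin n => min (if (i : ℕ) ≤ k then u₁ else v₁)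
        (if (i : ℕ) ≤ k then u₂ else v₂)) =
        (fun j : Fin n => if (j : ℕ) ≤ k then min u₁ u₂ else min v₁ v₂) := by
      funext j; by_cases hj : (j : ℕ) ≤ k <;> simp [hj]
    have e2 : (fun i : Fin n => max (if (i : ℕ) ≤ k then u₁ else v₁)
        (if (i : ℕ) ≤ k then u₂ else v₂)) =
        (fun j : Fin n => if (j : ℕ) ≤ k then max u₁ u₂ else max v₁ v₂) := by
      funext j; by_cases hj : (j : ℕ) ≤ k <;> simp [hj]
    rw [e1, e2] at h
    exact h
  have hsep : ∀ (k : ℕ) (u v : ℝ), u ∈ I → v ∈ I → u ≤ v →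
      S k u v = G k u + H k v := by
    intro k u v hu hv huv
    by_cases hvc : v ≤ c
    · have huc : u ≤ c := huv.trans hvc
      have h := modS k u c v v hu hc hv hv huc (le_refl v)
      rw [min_eq_left huv, min_eq_right hvc, max_eq_right huv, max_eq_left hvc] at h
      simp only [hGdef, hHdef, if_pos huc, if_pos hvc]
      linarith
    · push_neg at hvc
      by_cases huc : u ≤ c
      · have h := modS k u v c c hu hv hc hc huv (le_refl c)
        rw [min_eq_left huc, min_eq_right hvc.le, max_eq_right huc, max_eq_left hvc.le] at h
        simp only [hGdef, hHdef, if_pos huc, if_neg (not_le.mpr hvc)]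
        linarith
      · push_neg at huc
        have h := modS k c v u u hc hv hu hu (huc.le.trans huv) (le_refl u)
        rw [min_eq_left huc.le, min_eq_right huv, max_eq_right huc.le, max_eq_left huv] at h
        simp only [hGdef, hHdef, if_neg (not_le.mpr huc), if_neg (not_le.mpr hvc)]
        linarith
  refine ⟨fun i t => (if (i : ℕ) + 1 < n then G i t else 0) +
      (if 0 < (i : ℕ) then H ((i : ℕ) - 1) t - P t else 0) +
      (if (i : ℕ) = n - 1 then P t else 0), ?_⟩
  intro x hxI hmx
  set x' : ℕ → ℝ := fun k => x ⟨min k (n - 1), by omega⟩ with hx'def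
  have hx'I : ∀ k, x' k ∈ I := fun k => hxI _
  have hx'mono : Monotone x' := by
    intro a b hab
    exact hmx (by simp only [Fin.mk_le_mk]; omega)
  have hx'eq : ∀ j : Fin n, x' (j : ℕ) = x j := by
    intro j
    have hmin : (⟨min (j : ℕ) (n - 1), by omega⟩ : Fin n) = j := by
      apply Fin.ext; simp only []; omega
    simp only [hx'def, hmin]
  set Z : ℕ → Fin n → ℝ := fun m j => if (j : ℕ) ≤ m then x' m else x' j with hZdef
  have hZmem : ∀ m j, Z m j ∈ I := by
    intro m j; by_cases h : (j : ℕ) ≤ m <;> simp [hZdef, h, hx'I]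
  have hZmono : ∀ m, Monotone (Z m) := by
    intro m a b hab
    have hab' : (a : ℕ) ≤ b := hab
    simp only [hZdef]
    by_cases h1 : (a : ℕ) ≤ m <;> by_cases h2 : (b : ℕ) ≤ m <;>
      simp only [h1, h2, if_true, if_false]
    · exact le_refl _
    · exact hx'mono (by omega)
    · omega
    · exact hx'mono hab'
  have hZx : Z 0 = x := by
    funext j
    show (if (j : ℕ) ≤ 0 then x' 0 else x' (j : ℕ)) = x j
    by_cases h : (j : ℕ) ≤ 0
    · have h0 : (0 : ℕ) = (j : ℕ) := by omega
      rw [if_pos h, h0, hx'eq]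
    · rw [if_neg h, hx'eq]
  have hZtop : Z (n - 1) = fun _ => x' (n - 1) := by
    funext j
    have : (j : ℕ) ≤ n - 1 := by omega
    simp [hZdef, this]
  have key : ∀ d m, m + d + 1 = n →
      f (Z m) = P (x' (n - 1)) +
        ∑ k ∈ Finset.Ico m (n - 1), (S k (x' k) (x' (k + 1)) - P (x' (k + 1))) := by
    intro d
    induction d with
    | zero =>
      intro m hm
      have : m = n - 1 := by omega
      subst this
      rw [hZtop]
      simp [hPdef]
    | succ d ih =>
      intro m hm
      have hmn : m < n - 1 := by omega
      have step : f (Z m) + P (x' (m + 1)) = S m (x' m) (x' (m + 1)) + f (Z (m + 1)) := by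
        have h := mod (Z m) (fun _ => x' (m + 1)) (hZmem m) (fun _ => hx'I _)
          (hZmono m) monotone_const
        have e1 : (fun i : Fin n => min (Z m i) (x' (m + 1))) =
            (fun j : Fin n => if (j : ℕ) ≤ m then x' m else x' (m + 1)) := by
          funext j
          show min (Z m j) (x' (m + 1)) = if (j : ℕ) ≤ m then x' m else x' (m + 1)
          by_cases hj : (j : ℕ) ≤ m
          · rw [if_pos hj, show Z m j = x' m from if_pos hj]
            exact min_eq_left (hx'mono (Nat.le_succ m))
          · rw [if_neg hj, show Z m j = x' (j : ℕ) from if_neg hj]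
            exact min_eq_right (hx'mono (by omega : m + 1 ≤ (j : ℕ)))
        have e2 : (fun i : Fin n => max (Z m i) (x' (m + 1))) = Z (m + 1) := by
          funext j
          show max (Z m j) (x' (m + 1)) = Z (m + 1) j
          by_cases hj : (j : ℕ) ≤ m
          · rw [show Z m j = x' m from if_pos hj,
              show Z (m + 1) j = x' (m + 1) from if_pos (by omega)]
            exact max_eq_right (hx'mono (Nat.le_succ m))
          · by_cases hj' : (j : ℕ) ≤ m + 1
            · rw [show Z m j = x' (j : ℕ) from if_neg hj,
                show Z (m + 1) j = x' (m + 1) from if_pos hj',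
                show ((j : ℕ)) = m + 1 from by omega]
              exact max_self _
            · rw [show Z m j = x' (j : ℕ) from if_neg hj,
                show Z (m + 1) j = x' (j : ℕ) from if_neg hj']
              exact max_eq_left (hx'mono (by omega : m + 1 ≤ (j : ℕ)))
        rw [e1, e2] at h
        exact h
      have hsum := Finset.sum_eq_sum_Ico_succ_bot hmn
        (fun k => S k (x' k) (x' (k + 1)) - P (x' (k + 1)))
      rw [hsum]
      have hih := ih (m + 1) (by omega)
      linarith
  have main : f x = P (x' (n - 1)) +
      ∑ k ∈ Finset.range (n - 1), (S k (x' k) (x' (k + 1)) - P (x' (k + 1))) := by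
    have h := key (n - 1) 0 (by omega)
    rw [hZx] at h
    rw [h, Finset.range_eq_Ico]
  have main2 : f x = P (x' (n - 1)) +
      ∑ k ∈ Finset.range (n - 1), (G k (x' k) + H k (x' (k + 1)) - P (x' (k + 1))) := by
    rw [main]
    congr 1
    apply Finset.sum_congr rfl
    intro k hk
    rw [hsep k (x' k) (x' (k + 1)) (hx'I k) (hx'I (k + 1)) (hx'mono (Nat.le_succ k))]
  -- now compute the claimed sum
  have hgsum : ∑ i : Fin n, ((if (i : ℕ) + 1 < n then G i (x i) else 0) +
      (if 0 < (i : ℕ) then H ((i : ℕ) - 1) (x i) - P (x i) else 0) +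
      (if (i : ℕ) = n - 1 then P (x i) else 0)) =
      ∑ k ∈ Finset.range n, ((if k + 1 < n then G k (x' k) else 0) +
      (if 0 < k then H (k - 1) (x' k) - P (x' k) else 0) +
      (if k = n - 1 then P (x' k) else 0)) := by
    rw [← Fin.sum_univ_eq_sum_range]
    apply Finset.sum_congr rfl
    intro i _
    rw [hx'eq]
  rw [hgsum]
  have hn' : n = (n - 1) + 1 := by omega
  have splitA : ∑ k ∈ Finset.range n, (if k + 1 < n then G k (x' k) else 0) =
      ∑ k ∈ Finset.range (n - 1), G k (x' k) := by
    rw [hn', Finset.sum_range_succ]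
    have : ¬ ((n - 1) + 1 < (n - 1) + 1) := by omega
    rw [if_neg this, add_zero]
    apply Finset.sum_congr rfl
    intro k hk
    have hk' : k < n - 1 := Finset.mem_range.mp hk
    rw [if_pos (by omega)]
  have splitB : ∑ k ∈ Finset.range n, (if 0 < k then H (k - 1) (x' k) - P (x' k) else 0) =
      ∑ k ∈ Finset.range (n - 1), (H k (x' (k + 1)) - P (x' (k + 1))) := by
    rw [hn', Finset.sum_range_succ']
    have h0 : (if 0 < 0 then H (0 - 1) (x' 0) - P (x' 0) else 0) = 0 := if_neg (by omega)
    rw [h0, add_zero]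
    apply Finset.sum_congr rfl
    intro k _
    rw [if_pos (Nat.succ_pos k), Nat.add_sub_cancel]
  have splitC : ∑ k ∈ Finset.range n, (if k = n - 1 then P (x' k) else 0) =
      P (x' (n - 1)) := by
    rw [Finset.sum_ite_eq' (Finset.range n) (n - 1) (fun k => P (x' k))]
    rw [if_pos (Finset.mem_range.mpr (by omega))]
  rw [Finset.sum_add_distrib, Finset.sum_add_distrib, splitA, splitB, splitC, main2]
  have hre : ∑ k ∈ Finset.range (n - 1), (G k (x' k) + H k (x' (k + 1)) - P (x' (k + 1))) =
      (∑ k ∈ Finset.range (n - 1), G k (x' k)) +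
        ∑ k ∈ Finset.range (n - 1), (H k (x' (k + 1)) - P (x' (k + 1))) := by
    rw [← Finset.sum_add_distrib]
    apply Finset.sum_congr rfl
    intro k _
    ring
  rw [hre]
  ring


theorem statement6 (n : ℕ) (hn : 0 < n) (I : Set ℝ) (hI : I.OrdConnected)
    (hInt : ∃ a b : ℝ, a ∈ I ∧ b ∈ I ∧ a < b) (f : (Fin n → ℝ) → ℝ) :
    ComonModularOn I f ↔
      ∀ σ : Equiv.Perm (Fin n), ∃ g : Fin n → ℝ → ℝ,
        ∀ x : Fin n → ℝ, (∀ i, x i ∈ I) → Monotone (x ∘ σ) →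
          f x = ∑ i : Fin n, g i (x (σ i)) := by
  
  obtain ⟨a, b, ha, hb, hab⟩ := hInt
  constructor
  · intro h σ
    have hF : ComonModularOn I (fun y : Fin n → ℝ => f (fun j => y (σ.symm j))) := by
      intro x y hx hy hco
      obtain ⟨τ, h1, h2⟩ := hco
      refine h (fun j => x (σ.symm j)) (fun j => y (σ.symm j))
        (fun j => hx _) (fun j => hy _) ⟨τ.trans σ, ?_, ?_⟩
      · have e : ((fun j => x (σ.symm j)) ∘ ⇑(τ.trans σ)) = x ∘ ⇑τ := by
          funext i; simp
        rw [e]; exact h1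
      · have e : ((fun j => y (σ.symm j)) ∘ ⇑(τ.trans σ)) = y ∘ ⇑τ := by
          funext i; simp
        rw [e]; exact h2
    obtain ⟨g, hg⟩ := comod_sep n hn I a ha _ hF
    refine ⟨g, ?_⟩
    intro x hx hmon
    have h2 := hg (fun i => x (σ i)) (fun i => hx _) hmon
    simpa using h2
  · intro h x y hx hy hco
    obtain ⟨σ, hxσ, hyσ⟩ := hco
    obtain ⟨g, hg⟩ := h σ
    have hminI : ∀ i, min (x i) (y i) ∈ I := by
      intro i
      rcases le_total (x i) (y i) with hh | hh
      · rw [min_eq_left hh]; exact hx i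
      · rw [min_eq_right hh]; exact hy i
    have hmaxI : ∀ i, max (x i) (y i) ∈ I := by
      intro i
      rcases le_total (x i) (y i) with hh | hh
      · rw [max_eq_right hh]; exact hy i
      · rw [max_eq_left hh]; exact hx i
    have hminMono : Monotone ((fun i => min (x i) (y i)) ∘ ⇑σ) := fun a b hab =>
      min_le_min (hxσ hab) (hyσ hab)
    have hmaxMono : Monotone ((fun i => max (x i) (y i)) ∘ ⇑σ) := fun a b hab =>
      max_le_max (hxσ hab) (hyσ hab)
    rw [hg x hx hxσ, hg y hy hyσ, hg _ hminI hminMono, hg _ hmaxI hmaxMono]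
    rw [← Finset.sum_add_distrib, ← Finset.sum_add_distrib]
    apply Finset.sum_congr rfl
    intro i _
    show g i (x (σ i)) + g i (y (σ i)) =
      g i (min (x (σ i)) (y (σ i))) + g i (max (x (σ i)) (y (σ i)))
    rcases le_total (x (σ i)) (y (σ i)) with hh | hh
    · rw [min_eq_left hh, max_eq_right hh]
    · rw [min_eq_right hh, max_eq_left hh]; ring
end
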